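/- Let A = (Z_2)^n and B = Z_n, let e_i ∈ A denote the binary string of length n with a 1 in position i and 0 elsewhere (and e_0 the all-zero string), let S_A = {e_1, …, e_n}, let S_B = ±{s_1, …, s_k} ⊆ Z_n with k ≥ 2 and s_1 < s_2 < … < s_k < n/2, let φ : B → Aut(A) be the cyclic-shift action φ_i(a_1a_2…a_n) = a_{1−i}a_{2−i}…a_{n−i (mod n)}, and let G = C_{A⋊_φB}(S) where S = {(e_0, s) : s ∈ S_B} ∪ {(e_1, 0)}. If n/2 < |S_B| < n−1, then G is not λ'-optimal, λ(G) < λ'(G) = n < υ(G)/2 where υ(G) = n·2^n is the order of G, and for every λ'-atom X of G the induced subgraph G[X] is isomorphic to the circulant graph C_B(S_B). -/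

import Mathlib

open SimpleGraph

section Defs

variable {V : Type*}

/-- The set of edges of `G` with one endpoint in `X` and the other outside `X`. -/
def edgeBoundary (G : SimpleGraph V) (X : Set V) : Set (Sym2 V) :=
  {e | e ∈ G.edgeSet ∧ ∃ u ∈ X, ∃ v ∈ Xᶜ, e = s(u, v)}

/-- The edge-connectivity `λ(G)`: the minimum number of edges whose removal disconnects `G`. -/
noncomputable def edgeConn (G : SimpleGraph V) : ℕ :=
  sInf {k | ∃ F : Set (Sym2 V), F ⊆ G.edgeSet ∧ F.ncard = k ∧ ¬(G.deleteEdges F).Connected}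

/-- `F` is a restricted edge-cut of `G`: removing `F` disconnects `G` and leaves no
isolated vertices. -/
def IsRestrictedEdgeCut (G : SimpleGraph V) (F : Set (Sym2 V)) : Prop :=
  F ⊆ G.edgeSet ∧ ¬(G.deleteEdges F).Connected ∧ ∀ v : V, ∃ w : V, (G.deleteEdges F).Adj v w

/-- The restricted edge-connectivity `λ'(G)`. -/
noncomputable def restrictedEdgeConn (G : SimpleGraph V) : ℕ :=
  sInf {k | ∃ F : Set (Sym2 V), IsRestrictedEdgeCut G F ∧ F.ncard = k}

/-- The vertex-connectivity `κ(G)`: the minimum size of a set of vertices whose removal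
leaves a disconnected graph or a graph with at most one vertex. -/
noncomputable def vertexConn (G : SimpleGraph V) : ℕ :=
  sInf {k | ∃ S : Set V, S.ncard = k ∧
    (¬(G.induce (Sᶜ : Set V)).Connected ∨ (Sᶜ : Set V).ncard ≤ 1)}

/-- The minimum edge-degree `ξ(G) = min {d(u) + d(v) - 2 : uv ∈ E(G)}`. -/
noncomputable def minEdgeDegree (G : SimpleGraph V) : ℕ :=
  sInf {k | ∃ u v : V, G.Adj u v ∧ (G.neighborSet u).ncard + (G.neighborSet v).ncard - 2 = k}

/-- `G` is `λ'`-optimal if `λ'(G) = ξ(G)`. -/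
def LambdaPrimeOptimal (G : SimpleGraph V) : Prop :=
  restrictedEdgeConn G = minEdgeDegree G

/-- The replacement product of `G1` and `G2` with respect to an edge-labelling `ℓ`,
where `ℓ x i` is the other endpoint of the edge of `G1` labelled `i` at the vertex `x`.
Vertices `(x, i)` and `(y, j)` are adjacent iff either `x = y` and `i j ∈ E(G2)`, or
`x y ∈ E(G1)` and the edge `x y` is labelled `i` at `x` and `j` at `y`. -/
def replacementProduct {V1 V2 : Type*} (G1 : SimpleGraph V1) (G2 : SimpleGraph V2)
    (ℓ : V1 → V2 → V1) : SimpleGraph (V1 × V2) where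
  Adj p q := (p.1 = q.1 ∧ G2.Adj p.2 q.2) ∨
    (G1.Adj p.1 q.1 ∧ ℓ p.1 p.2 = q.1 ∧ ℓ q.1 q.2 = p.1)
  symm := by
    constructor
    rintro p q (⟨h1, h2⟩ | ⟨h1, h2, h3⟩)
    · exact Or.inl ⟨h1.symm, h2.symm⟩
    · exact Or.inr ⟨h1.symm, h3, h2⟩
  loopless := by
    constructor
    rintro p (⟨_, h⟩ | ⟨h, _⟩)
    · exact G2.loopless.irrefl _ h
    · exact G1.loopless.irrefl _ h

/-- `ℓ` is a valid edge-labelling of `G1` for the replacement product: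
for each vertex `x`, `ℓ x` is injective and `ℓ x i` is always a neighbour of `x`
(hence `ℓ x` enumerates the neighbours of `x` when `G1` is `|V2|`-regular). -/
def IsRPLabelling {V1 V2 : Type*} (G1 : SimpleGraph V1) (ℓ : V1 → V2 → V1) : Prop :=
  (∀ x, Function.Injective (ℓ x)) ∧ ∀ x i, G1.Adj x (ℓ x i)

end Defs

/-- The (undirected) Cayley graph of a group `Γ` with connection set `S`: vertices are the
elements of `Γ`, and distinct `x, y` are adjacent iff `x⁻¹ * y ∈ S` (or symmetrically
`y⁻¹ * x ∈ S`; when `S = S⁻¹` the two conditions agree). -/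
def cayleyGraph {Γ : Type*} [Group Γ] (S : Set Γ) : SimpleGraph Γ where
  Adj x y := x ≠ y ∧ (x⁻¹ * y ∈ S ∨ y⁻¹ * x ∈ S)
  symm := by
    constructor
    rintro x y ⟨h1, h2⟩
    exact ⟨h1.symm, h2.symm⟩
  loopless := by
    constructor
    rintro x ⟨h, -⟩
    exact h rfl

/-- A `λ'`-fragment of `G`: a vertex set `X` with `|X| ≥ 2` whose edge-boundary is a
minimum restricted edge-cut and such that both `G[X]` and `G[complement of X]` are
connected. -/
def IsLambdaPrimeFragment {V : Type*} (G : SimpleGraph V) (X : Set V) : Prop :=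
  2 ≤ X.ncard ∧ IsRestrictedEdgeCut G (edgeBoundary G X) ∧
    (edgeBoundary G X).ncard = restrictedEdgeConn G ∧
    (G.induce X).Connected ∧ (G.induce (Xᶜ : Set V)).Connected

/-- A `λ'`-atom of `G`: a `λ'`-fragment of minimum cardinality. -/
def IsLambdaPrimeAtom {V : Type*} (G : SimpleGraph V) (X : Set V) : Prop :=
  IsLambdaPrimeFragment G X ∧
    ∀ Y : Set V, IsLambdaPrimeFragment G Y → X.ncard ≤ Y.ncard

/-- The binary string of length `n` (indexed by `ZMod n`) with a `1` in position `k` and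
`0` elsewhere. -/
def eVec (n : ℕ) (k : ZMod n) : ZMod n → ZMod 2 := fun j => if j = k then 1 else 0

set_option linter.unusedSectionVars false

section Counting

private lemma pcount_fiber_lb {α β : Type*} [Finite α] [Finite β]
    (S : Set (α × β)) (Y : Set α) (m : ℕ)
    (hS : ∀ p ∈ S, p.1 ∈ Y)
    (h : ∀ i ∈ Y, m ≤ {j | (i, j) ∈ S}.ncard) :
    Y.ncard * m ≤ S.ncard := by
  classical
  haveI := Fintype.ofFinite α
  haveI := Fintype.ofFinite β
  rw [Set.ncard_eq_toFinset_card' S, Set.ncard_eq_toFinset_card' Y]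
  rw [Finset.card_eq_sum_card_fiberwise (f := Prod.fst) (t := Y.toFinset)
    (fun x hx => Set.mem_toFinset.2 (hS x (Set.mem_toFinset.1 hx)))]
  calc Y.toFinset.card * m = ∑ _i ∈ Y.toFinset, m := by
        rw [Finset.sum_const, smul_eq_mul, mul_comm]
    _ ≤ _ := by
        refine Finset.sum_le_sum fun i hi => ?_
        have hm := h i (Set.mem_toFinset.1 hi)
        rw [Set.ncard_eq_toFinset_card'] at hm
        refine le_trans hm (Finset.card_le_card_of_injOn (fun j => (i, j)) ?_ ?_)
        · intro j hj
          simp only [Finset.mem_coe, Set.mem_toFinset, Set.mem_setOf_eq] at hj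
          simp [Set.mem_toFinset, hj]
        · intro x _ y _ hxy
          exact (Prod.ext_iff.1 hxy).2

private lemma ncard_lb_two {α : Type*} [Finite α] {A B S : Set α}
    (hA : A ⊆ S) (hB : B ⊆ S) (hAB : Disjoint A B) :
    A.ncard + B.ncard ≤ S.ncard := by
  rw [← Set.ncard_union_eq hAB (Set.toFinite A) (Set.toFinite B)]
  exact Set.ncard_le_ncard (Set.union_subset hA hB) (Set.toFinite S)

private lemma ncard_lb_three {α : Type*} [Finite α] {A B C S : Set α}
    (hA : A ⊆ S) (hB : B ⊆ S) (hC : C ⊆ S) (hAB : Disjoint A B)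
    (hAC : Disjoint A C) (hBC : Disjoint B C) :
    A.ncard + B.ncard + C.ncard ≤ S.ncard := by
  have h1 : (A ∪ B).ncard = A.ncard + B.ncard :=
    Set.ncard_union_eq hAB (Set.toFinite A) (Set.toFinite B)
  have h2 : Disjoint (A ∪ B) C := Set.disjoint_union_left.2 ⟨hAC, hBC⟩
  rw [← h1, ← Set.ncard_union_eq h2 (Set.toFinite _) (Set.toFinite C)]
  exact Set.ncard_le_ncard (Set.union_subset (Set.union_subset hA hB) hC) (Set.toFinite S)

private lemma arith1 (t c : ℕ) (h1 : 1 ≤ t) (h2 : t ≤ c) : c ≤ t * (c + 1 - t) := by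
  obtain ⟨x, rfl⟩ : ∃ x, t = 1 + x := ⟨t - 1, by omega⟩
  obtain ⟨y, rfl⟩ : ∃ y, c = 1 + x + y := ⟨c - (1 + x), by omega⟩
  have : (1 + x) * (1 + x + y + 1 - (1 + x)) = (1 + x) * (y + 1) := by congr 1; omega
  rw [this]
  nlinarith [Nat.zero_le (x * y)]

private lemma arith2 (t c : ℕ) (h1 : 2 ≤ t) (h2 : t ≤ c) :
    2 * c ≤ t * (c + 1 - t) + t := by
  obtain ⟨x, rfl⟩ : ∃ x, t = 2 + x := ⟨t - 2, by omega⟩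
  obtain ⟨y, rfl⟩ : ∃ y, c = 2 + x + y := ⟨c - (2 + x), by omega⟩
  have : (2 + x) * (2 + x + y + 1 - (2 + x)) = (2 + x) * (y + 1) := by congr 1; omega
  rw [this]
  nlinarith [Nat.zero_le (x * y)]

end Counting


section Hypercube

variable {ι : Type*} [Fintype ι] [DecidableEq ι]

private def hunit (j : ι) : ι → ZMod 2 := fun i => if i = j then 1 else 0

private lemma z2_add_add : ∀ x : ZMod 2, x + 1 + 1 = x := by decide

private lemma z2_ne_iff : ∀ x y : ZMod 2, x ≠ y ↔ x = y + 1 := by decide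

private lemma z2_ne_iff' : ∀ x y : ZMod 2, x ≠ y → x + 1 = y := by decide

private lemma z2_add_one_ne : ∀ x : ZMod 2, x + 1 ≠ x := by decide

private lemma hunit_apply_self (j : ι) : hunit j j = 1 := by simp [hunit]

private lemma hunit_apply_ne {i j : ι} (h : i ≠ j) : hunit j i = 0 := by simp [hunit, h]

private lemma add_hunit_apply (a : ι → ZMod 2) (j i : ι) :
    (a + hunit j) i = a i + hunit j i := rfl

private lemma add_hunit_add_hunit (a : ι → ZMod 2) (j : ι) : a + hunit j + hunit j = a := by
  funext i
  by_cases h : i = j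
  · subst h; rw [add_hunit_apply, add_hunit_apply, hunit_apply_self, z2_add_add]
  · rw [add_hunit_apply, add_hunit_apply, hunit_apply_ne h, add_zero, add_zero]

private lemma add_hunit_ne (a : ι → ZMod 2) (j : ι) : a + hunit j ≠ a := by
  intro h
  have := congrFun h j
  rw [add_hunit_apply, hunit_apply_self] at this
  exact z2_add_one_ne (a j) this

private lemma hunit_inj {j j' : ι} (h : hunit (ι := ι) j = hunit j') : j = j' := by
  by_contra hc
  have := congrFun h j
  rw [hunit_apply_self, hunit_apply_ne hc] at this
  exact one_ne_zero this

/-- Crossing pairs of the hypercube: `(x, j)` with `x ∈ P`, `x + e_j ∉ P`, `j ∈ T`,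
and `x` in the subcube of `a₀` with free coordinates `T`. -/
private def HCross (P : Set (ι → ZMod 2)) (T : Finset ι) (a₀ : ι → ZMod 2) :
    Set ((ι → ZMod 2) × ι) :=
  {q | q.2 ∈ T ∧ q.1 ∈ P ∧ q.1 + hunit q.2 ∉ P ∧ ∀ i ∉ T, q.1 i = a₀ i}

private lemma HCross_congr {P : Set (ι → ZMod 2)} {T : Finset ι} {x y : ι → ZMod 2}
    (h : ∀ i ∉ T, x i = y i) : HCross P T x = HCross P T y := by
  ext q
  simp only [HCross, Set.mem_setOf_eq]
  exact and_congr_right fun _ => and_congr_right fun _ => and_congr_right fun _ =>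
    ⟨fun hq i hi => (hq i hi).trans (h i hi), fun hq i hi => (hq i hi).trans (h i hi).symm⟩

private lemma HCross_mono {P : Set (ι → ZMod 2)} {T T' : Finset ι} {x a₀ : ι → ZMod 2}
    (hT : T' ⊆ T) (hx : ∀ i ∉ T, x i = a₀ i) : HCross P T' x ⊆ HCross P T a₀ := by
  rintro q ⟨h1, h2, h3, h4⟩
  exact ⟨hT h1, h2, h3, fun i hi => (h4 i (fun hc => hi (hT hc))).trans (hx i hi)⟩

private lemma hyper_conn_aux {P : Set (ι → ZMod 2)} {T : Finset ι} {b : ι → ZMod 2}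
    (hb : b ∉ P) :
    ∀ (m : ℕ) (a : ι → ZMod 2), (T.filter (fun i => a i ≠ b i)).card = m →
      a ∈ P → (∀ i ∉ T, a i = b i) → (HCross P T a).Nonempty := by
  intro m
  induction m using Nat.strong_induction_on with
  | _ m IH =>
    intro a hcard ha hoff
    have hne : a ≠ b := fun h => hb (h ▸ ha)
    have hD : (T.filter (fun i => a i ≠ b i)).Nonempty := by
      rw [Finset.filter_nonempty_iff]
      by_contra hc
      push_neg at hc
      refine hne (funext fun i => ?_)
      by_cases hi : i ∈ T
      · exact hc i hi
      · exact hoff i hi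
    obtain ⟨j, hj⟩ := hD
    rw [Finset.mem_filter] at hj
    obtain ⟨hjT, hjab⟩ := hj
    by_cases hP : a + hunit j ∈ P
    · -- recurse
      have hkey : ∀ i, (a + hunit j) i = if i = j then b i else a i := by
        intro i
        by_cases hi : i = j
        · rw [if_pos hi, hi, add_hunit_apply, hunit_apply_self]
          exact z2_ne_iff' _ _ hjab
        · rw [if_neg hi, add_hunit_apply, hunit_apply_ne hi, add_zero]
      have hfilter : T.filter (fun i => (a + hunit j) i ≠ b i)
          = (T.filter (fun i => a i ≠ b i)).erase j := by
        ext i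
        simp only [Finset.mem_filter, Finset.mem_erase]
        constructor
        · rintro ⟨hiT, hiab⟩
          have hij : i ≠ j := by
            intro h
            rw [hkey, if_pos h] at hiab; exact hiab rfl
          refine ⟨hij, hiT, ?_⟩
          rwa [hkey, if_neg hij] at hiab
        · rintro ⟨hij, hiT, hiab⟩
          refine ⟨hiT, ?_⟩
          rwa [hkey, if_neg hij]
      have hlt : ((T.filter (fun i => (a + hunit j) i ≠ b i))).card < m := by
        rw [hfilter]
        calc _ < (T.filter (fun i => a i ≠ b i)).card :=
              Finset.card_erase_lt_of_mem (Finset.mem_filter.2 ⟨hjT, hjab⟩)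
          _ = m := hcard
      have hoff' : ∀ i ∉ T, (a + hunit j) i = b i := fun i hi => by
        rw [hkey, if_neg (fun h => hi (by rw [h]; exact hjT))]
        exact hoff i hi
      have := IH _ hlt (a + hunit j) rfl hP hoff'
      rwa [HCross_congr (x := a + hunit j) (y := a)
        (fun i hi => by rw [hkey, if_neg (fun h => hi (by rw [h]; exact hjT))])] at this
    · exact ⟨(a, j), hjT, ha, hP, fun i _ => rfl⟩

private lemma hyper_conn {P : Set (ι → ZMod 2)} {T : Finset ι} {a b : ι → ZMod 2}
    (ha : a ∈ P) (hb : b ∉ P) (hab : ∀ i ∉ T, a i = b i) :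
    (HCross P T a).Nonempty :=
  hyper_conn_aux hb _ a rfl ha hab

end Hypercube
private lemma hyper_main {ι : Type*} [Fintype ι] [DecidableEq ι] {P : Set (ι → ZMod 2)} :
    ∀ (T : Finset ι) (a₀ b : ι → ZMod 2), a₀ ∈ P → b ∉ P →
      (∀ i ∉ T, b i = a₀ i) → T.card ≤ (HCross P T a₀).ncard := by
  intro T
  induction T using Finset.induction_on with
  | empty => intro a₀ b _ _ _; simp
  | @insert j₀ T' hj₀ IH =>
    intro a₀ b ha₀ hb hboff
    have hj₀T : j₀ ∈ insert j₀ T' := Finset.mem_insert_self _ _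
    -- class helpers
    have hC0C1 : ∀ x : ι → ZMod 2, (∀ i ∉ T', x i = a₀ i) →
        ∀ i ∉ T', (x + hunit j₀) i = (a₀ + hunit j₀) i := by
      intro x hx i hi
      rw [add_hunit_apply, add_hunit_apply, hx i hi]
    have hC1C0 : ∀ x : ι → ZMod 2, (∀ i ∉ T', x i = (a₀ + hunit j₀) i) →
        ∀ i ∉ T', (x + hunit j₀) i = a₀ i := by
      intro x hx i hi
      have := congrFun (add_hunit_add_hunit a₀ j₀) i
      rw [add_hunit_apply, hx i hi, ← add_hunit_apply]
      exact this
    have ha₁off : ∀ i ∉ insert j₀ T', (a₀ + hunit j₀) i = a₀ i := by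
      intro i hi
      rw [add_hunit_apply, hunit_apply_ne (fun h => hi (by rw [h]; exact hj₀T)), add_zero]
    -- the three disjoint pieces
    have hsub1 : HCross P T' a₀ ⊆ HCross P (insert j₀ T') a₀ :=
      HCross_mono (Finset.subset_insert _ _) (fun i _ => rfl)
    have hsub2 : HCross P T' (a₀ + hunit j₀) ⊆ HCross P (insert j₀ T') a₀ :=
      HCross_mono (Finset.subset_insert _ _) ha₁off
    have hsub3 : {q ∈ HCross P (insert j₀ T') a₀ | q.2 = j₀} ⊆ HCross P (insert j₀ T') a₀ :=
      Set.sep_subset _ _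
    have hd12 : Disjoint (HCross P T' a₀) (HCross P T' (a₀ + hunit j₀)) := by
      rw [Set.disjoint_left]
      rintro q ⟨_, _, _, h1⟩ ⟨_, _, _, h2⟩
      have e1 := h1 j₀ hj₀
      have e2 := h2 j₀ hj₀
      rw [add_hunit_apply, hunit_apply_self] at e2
      rw [e1] at e2
      exact z2_add_one_ne (a₀ j₀) e2.symm
    have hd13 : Disjoint (HCross P T' a₀) {q ∈ HCross P (insert j₀ T') a₀ | q.2 = j₀} := by
      rw [Set.disjoint_left]
      rintro q ⟨hq2, _, _, _⟩ ⟨_, hq2'⟩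
      exact hj₀ (hq2' ▸ hq2)
    have hd23 : Disjoint (HCross P T' (a₀ + hunit j₀))
        {q ∈ HCross P (insert j₀ T') a₀ | q.2 = j₀} := by
      rw [Set.disjoint_left]
      rintro q ⟨hq2, _, _, _⟩ ⟨_, hq2'⟩
      exact hj₀ (hq2' ▸ hq2)
    have hcount := ncard_lb_three hsub1 hsub2 hsub3 hd12 hd13 hd23
    have hmem3 : ∀ x : ι → ZMod 2, x ∈ P → x + hunit j₀ ∉ P →
        (∀ i ∉ insert j₀ T', x i = a₀ i) →
        (x, j₀) ∈ {q ∈ HCross P (insert j₀ T') a₀ | q.2 = j₀} :=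
      fun x h1 h2 hx => ⟨⟨hj₀T, h1, h2, hx⟩, rfl⟩
    have hp3pos : ∀ x : ι → ZMod 2, x ∈ P → x + hunit j₀ ∉ P →
        (∀ i ∉ insert j₀ T', x i = a₀ i) →
        1 ≤ {q ∈ HCross P (insert j₀ T') a₀ | q.2 = j₀}.ncard := by
      intro x h1 h2 hx
      have := hmem3 x h1 h2 hx
      have hfin : ({q ∈ HCross P (insert j₀ T') a₀ | q.2 = j₀}).Finite := Set.toFinite _
      exact (Set.ncard_pos hfin).2 ⟨_, this⟩
    rw [Finset.card_insert_of_notMem hj₀]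
    by_cases hC0 : ∃ x : ι → ZMod 2, (∀ i ∉ T', x i = a₀ i) ∧ x ∉ P
    · obtain ⟨x, hxC0, hxP⟩ := hC0
      have h1 : T'.card ≤ (HCross P T' a₀).ncard := IH a₀ x ha₀ hxP hxC0
      have h23 : 1 ≤ (HCross P T' (a₀ + hunit j₀)).ncard +
          ({q ∈ HCross P (insert j₀ T') a₀ | q.2 = j₀}).ncard := by
        by_cases hC1P : ∃ y : ι → ZMod 2, (∀ i ∉ T', y i = (a₀ + hunit j₀) i) ∧ y ∉ P
        · obtain ⟨y, hyC1, hyP⟩ := hC1P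
          by_cases hC1Q : ∃ z : ι → ZMod 2, (∀ i ∉ T', z i = (a₀ + hunit j₀) i) ∧ z ∈ P
          · obtain ⟨z, hzC1, hzP⟩ := hC1Q
            have hne := hyper_conn (P := P) (T := T') hzP hyP
              (fun i hi => (hzC1 i hi).trans (hyC1 i hi).symm)
            rw [HCross_congr hzC1] at hne
            have : 1 ≤ (HCross P T' (a₀ + hunit j₀)).ncard :=
              (Set.ncard_pos (Set.toFinite _)).2 hne
            omega
          · push_neg at hC1Q
            have ha₁P : a₀ + hunit j₀ ∉ P := hC1Q _ (fun _ _ => rfl)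
            have := hp3pos a₀ ha₀ ha₁P (fun i _ => rfl)
            omega
        · push_neg at hC1P
          have hxh : x + hunit j₀ ∈ P := hC1P _ (hC0C1 x hxC0)
          have hxhh : (x + hunit j₀) + hunit j₀ ∉ P := by
            rw [add_hunit_add_hunit]; exact hxP
          have := hp3pos (x + hunit j₀) hxh hxhh (fun i hi => by
            rw [add_hunit_apply,
              hunit_apply_ne (fun h => hi (by rw [h]; exact hj₀T)), add_zero]
            exact hxC0 i (fun hc => hi (Finset.mem_insert_of_mem hc)))
          omega
      omega
    · push_neg at hC0
      -- C0 entirely inside P; b is in class C1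
      have hbj₀ : b j₀ ≠ a₀ j₀ := by
        intro h
        refine hb (hC0 b (fun i hi => ?_))
        by_cases hij : i = j₀
        · rw [hij, h]
        · exact hboff i (fun hc => (Finset.mem_insert.1 hc).elim hij hi)
      have hbC1 : ∀ i ∉ T', b i = (a₀ + hunit j₀) i := by
        intro i hi
        by_cases hij : i = j₀
        · subst hij
          rw [add_hunit_apply, hunit_apply_self]
          exact (z2_ne_iff _ _).1 hbj₀
        · rw [add_hunit_apply, hunit_apply_ne hij, add_zero]
          exact hboff i (fun hc => (Finset.mem_insert.1 hc).elim hij hi)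
      have hb1C0 : ∀ i ∉ T', (b + hunit j₀) i = a₀ i := hC1C0 b hbC1
      have hb1P : b + hunit j₀ ∈ P := hC0 _ hb1C0
      have hb1h : (b + hunit j₀) + hunit j₀ ∉ P := by rw [add_hunit_add_hunit]; exact hb
      have h3 : 1 ≤ ({q ∈ HCross P (insert j₀ T') a₀ | q.2 = j₀}).ncard :=
        hp3pos _ hb1P hb1h (fun i hi =>
          hb1C0 i (fun hc => hi (Finset.mem_insert_of_mem hc)))
      by_cases hC1Q : ∃ z : ι → ZMod 2, (∀ i ∉ T', z i = (a₀ + hunit j₀) i) ∧ z ∈ P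
      · obtain ⟨z, hzC1, hzP⟩ := hC1Q
        have h2 : T'.card ≤ (HCross P T' (a₀ + hunit j₀)).ncard := by
          have := IH z b hzP hb (fun i hi => (hbC1 i hi).trans (hzC1 i hi).symm)
          rwa [HCross_congr hzC1] at this
        omega
      · push_neg at hC1Q
        -- everything in C1 is outside P : the whole matching in direction j₀ crosses
        have hbig : T'.card + 1 ≤ ({q ∈ HCross P (insert j₀ T') a₀ | q.2 = j₀}).ncard := by
          have hinj : Set.InjOn (fun j => ((if j = j₀ then a₀ else a₀ + hunit j, j₀) :
              (ι → ZMod 2) × ι)) ↑(insert j₀ T') := by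
            intro j _ j' _ hjj'
            simp only [Prod.mk.injEq] at hjj'
            by_cases h : j = j₀ <;> by_cases h' : j' = j₀
            · rw [h, h']
            · rw [if_pos h, if_neg h'] at hjj'
              exact absurd hjj'.1.symm (add_hunit_ne a₀ j')
            · rw [if_neg h, if_pos h'] at hjj'
              exact absurd hjj'.1 (add_hunit_ne a₀ j)
            · rw [if_neg h, if_neg h'] at hjj'
              exact hunit_inj (add_left_cancel hjj'.1)
          have himg : (fun j => ((if j = j₀ then a₀ else a₀ + hunit j, j₀) :
              (ι → ZMod 2) × ι)) '' ↑(insert j₀ T') ⊆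
              {q ∈ HCross P (insert j₀ T') a₀ | q.2 = j₀} := by
            rintro q ⟨j, hj, rfl⟩
            show (if j = j₀ then a₀ else a₀ + hunit j, j₀) ∈ _
            by_cases h : j = j₀
            · rw [if_pos h]
              exact hmem3 a₀ ha₀ (hC1Q _ (fun _ _ => rfl)) (fun i _ => rfl)
            · rw [if_neg h]
              have hjT' : j ∈ T' := (Finset.mem_insert.1 hj).resolve_left h
              have hxC0 : ∀ i ∉ T', (a₀ + hunit j) i = a₀ i := by
                intro i hi
                rw [add_hunit_apply, hunit_apply_ne (fun hc => hi (by rw [hc]; exact hjT')), add_zero]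
              refine hmem3 _ (hC0 _ hxC0) (hC1Q _ (hC0C1 _ hxC0)) ?_
              intro i hi
              exact hxC0 i (fun hc => hi (Finset.mem_insert_of_mem hc))
          calc T'.card + 1 = (insert j₀ T').card :=
                (Finset.card_insert_of_notMem hj₀).symm
            _ = (↑(insert j₀ T') : Set ι).ncard := (Set.ncard_coe_finset _).symm
            _ = ((fun j => ((if j = j₀ then a₀ else a₀ + hunit j, j₀) :
                  (ι → ZMod 2) × ι)) '' ↑(insert j₀ T')).ncard :=
                (Set.ncard_image_of_injOn hinj).symm
            _ ≤ _ := Set.ncard_le_ncard himg (Set.toFinite _)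
        omega
section Main

open Multiplicative

variable {n : ℕ}

private def vmk (φ : Multiplicative (ZMod n) →* MulAut (Multiplicative (ZMod n → ZMod 2)))
    (a : ZMod n → ZMod 2) (i : ZMod n) :
    (Multiplicative (ZMod n → ZMod 2)) ⋊[φ] Multiplicative (ZMod n) :=
  ⟨ofAdd a, ofAdd i⟩

variable {φ : Multiplicative (ZMod n) →* MulAut (Multiplicative (ZMod n → ZMod 2))}

private lemma vmk_eta (p : (Multiplicative (ZMod n → ZMod 2)) ⋊[φ] Multiplicative (ZMod n)) :
    vmk φ p.left.toAdd p.right.toAdd = p := rfl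

private lemma vmk_inj {a b : ZMod n → ZMod 2} {i j : ZMod n}
    (h : vmk φ a i = vmk φ b j) : a = b ∧ i = j := by
  have h1 := congrArg (fun p => SemidirectProduct.left p) h
  have h2 := congrArg (fun p => SemidirectProduct.right p) h
  exact ⟨congrArg toAdd h1, congrArg toAdd h2⟩

private instance finV [NeZero n] :
    Finite ((Multiplicative (ZMod n → ZMod 2)) ⋊[φ] Multiplicative (ZMod n)) :=
  Finite.of_injective (fun p => (p.left, p.right))
    (fun p q h => by
      rcases p with ⟨a, i⟩; rcases q with ⟨b, j⟩
      simp only [Prod.mk.injEq] at h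
      rw [h.1, h.2])

private lemma eVec_eq_hunit (k : ZMod n) : eVec n k = hunit k := rfl

private lemma eVec_shift (k i m : ZMod n) : eVec n (k + i) m = eVec n k (m - i) := by
  simp only [eVec]
  by_cases h : m - i = k
  · rw [if_pos h, if_pos (by rw [← h]; ring)]
  · rw [if_neg h, if_neg (fun hc => h (by rw [hc]; ring))]

variable {S : Set ((Multiplicative (ZMod n → ZMod 2)) ⋊[φ] Multiplicative (ZMod n))}
variable {SB : Set (ZMod n)}

private lemma inv_mul_left' (x y : (Multiplicative (ZMod n → ZMod 2)) ⋊[φ] Multiplicative (ZMod n)) :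
    (x⁻¹ * y).left = (φ x.right⁻¹) (x.left⁻¹ * y.left) := by
  rw [SemidirectProduct.mul_left, SemidirectProduct.inv_left, SemidirectProduct.inv_right, map_mul]

private lemma inv_mul_right' (x y : (Multiplicative (ZMod n → ZMod 2)) ⋊[φ] Multiplicative (ZMod n)) :
    (x⁻¹ * y).right = x.right⁻¹ * y.right := rfl

private lemma condA_iff (x y : (Multiplicative (ZMod n → ZMod 2)) ⋊[φ] Multiplicative (ZMod n))
    (z : ZMod n) :
    x⁻¹ * y = ⟨1, ofAdd z⟩ ↔ (x.left = y.left ∧ z = y.right.toAdd - x.right.toAdd) := by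
  rw [SemidirectProduct.ext_iff, inv_mul_left', inv_mul_right']
  constructor
  · rintro ⟨h1, h2⟩
    refine ⟨?_, ?_⟩
    · have := (EmbeddingLike.map_eq_one_iff (f := φ x.right⁻¹)).1 h1
      exact (inv_mul_eq_one.1 this)
    · have := congrArg toAdd h2
      simp only [toAdd_mul, toAdd_inv, toAdd_ofAdd] at this
      rw [← this]; ring
  · rintro ⟨h1, h2⟩
    refine ⟨?_, ?_⟩
    · rw [h1, inv_mul_cancel, map_one]
    · apply toAdd.injective
      simp only [toAdd_mul, toAdd_inv, toAdd_ofAdd, h2]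
      ring

private lemma condB_iff
    (hφ : ∀ (i : Multiplicative (ZMod n)) (a : Multiplicative (ZMod n → ZMod 2)) (j : ZMod n),
      Multiplicative.toAdd (φ i a) j = Multiplicative.toAdd a (j - Multiplicative.toAdd i))
    (x y : (Multiplicative (ZMod n → ZMod 2)) ⋊[φ] Multiplicative (ZMod n)) :
    x⁻¹ * y = ⟨ofAdd (eVec n 1), 1⟩ ↔
      (x.right = y.right ∧
        y.left.toAdd = x.left.toAdd + eVec n (1 + x.right.toAdd)) := by
  rw [SemidirectProduct.ext_iff, inv_mul_left', inv_mul_right']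
  have hw : ∀ m : ZMod n, (x.left⁻¹ * y.left).toAdd m = - x.left.toAdd m + y.left.toAdd m :=
    fun m => rfl
  constructor
  · rintro ⟨h1, h2⟩
    refine ⟨inv_mul_eq_one.1 h2, ?_⟩
    funext m
    have H := congrArg toAdd h1
    have H2 := congrFun H (m - x.right.toAdd)
    rw [hφ] at H2
    simp only [toAdd_inv, toAdd_ofAdd] at H2
    rw [sub_neg_eq_add, sub_add_cancel, hw] at H2
    have : y.left.toAdd m = x.left.toAdd m + eVec n 1 (m - x.right.toAdd) := by
      rw [← H2]; ring
    rw [this, ← eVec_shift]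
    rfl
  · rintro ⟨h1, h2⟩
    refine ⟨?_, by rw [h1, inv_mul_cancel]⟩
    apply toAdd.injective
    funext j
    rw [hφ]
    simp only [toAdd_inv, toAdd_ofAdd, sub_neg_eq_add]
    rw [hw, congrFun h2 (j + x.right.toAdd)]
    have : eVec n (1 + x.right.toAdd) (j + x.right.toAdd) = eVec n 1 j := by
      rw [eVec_shift, add_sub_cancel_right]
    rw [Pi.add_apply, this]; ring

private lemma adj_iff
    (hφ : ∀ (i : Multiplicative (ZMod n)) (a : Multiplicative (ZMod n → ZMod 2)) (j : ZMod n),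
      Multiplicative.toAdd (φ i a) j = Multiplicative.toAdd a (j - Multiplicative.toAdd i))
    (hS : S = {p : (Multiplicative (ZMod n → ZMod 2)) ⋊[φ] Multiplicative (ZMod n) |
        ∃ z ∈ SB, p = ⟨1, Multiplicative.ofAdd z⟩} ∪
      {(⟨Multiplicative.ofAdd (eVec n 1), 1⟩ :
        (Multiplicative (ZMod n → ZMod 2)) ⋊[φ] Multiplicative (ZMod n))})
    (hsym : ∀ z ∈ SB, -z ∈ SB) (h0 : (0 : ZMod n) ∉ SB)
    (x y : (Multiplicative (ZMod n → ZMod 2)) ⋊[φ] Multiplicative (ZMod n)) :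
    (cayleyGraph S).Adj x y ↔
      ((x.left = y.left ∧ y.right.toAdd - x.right.toAdd ∈ SB) ∨
       (x.right = y.right ∧
         y.left.toAdd = x.left.toAdd + eVec n (1 + x.right.toAdd))) := by
  have hmem : ∀ p : (Multiplicative (ZMod n → ZMod 2)) ⋊[φ] Multiplicative (ZMod n),
      p ∈ S ↔ ((∃ z ∈ SB, p = ⟨1, ofAdd z⟩) ∨ p = ⟨ofAdd (eVec n 1), 1⟩) := by
    intro p
    rw [hS]
    simp only [Set.mem_union, Set.mem_setOf_eq, Set.mem_singleton_iff]
  constructor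
  · rintro ⟨hne, h | h⟩
    · rw [hmem] at h
      rcases h with ⟨z, hz, h⟩ | h
      · left
        obtain ⟨h1, h2⟩ := (condA_iff x y z).1 h
        exact ⟨h1, h2 ▸ hz⟩
      · right
        exact (condB_iff hφ x y).1 h
    · rw [hmem] at h
      rcases h with ⟨z, hz, h⟩ | h
      · left
        obtain ⟨h1, h2⟩ := (condA_iff y x z).1 h
        refine ⟨h1.symm, ?_⟩
        have := hsym z hz
        rw [h2] at this
        simpa using this
      · right
        obtain ⟨h1, h2⟩ := (condB_iff hφ y x).1 h
        refine ⟨h1.symm, ?_⟩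
        funext m
        have hz2 : ∀ u : ZMod 2, u + u = 0 := by decide
        have e1 : toAdd x.left m = toAdd y.left m + eVec n (1 + toAdd y.right) m := by
          rw [h2]; rfl
        show toAdd y.left m = toAdd x.left m + eVec n (1 + toAdd x.right) m
        rw [e1, ← h1, add_assoc, hz2, add_zero]
  · intro h
    rcases h with ⟨h1, h2⟩ | ⟨h1, h2⟩
    · refine ⟨?_, Or.inl ?_⟩
      · intro he
        rw [he] at h2
        simp only [sub_self] at h2
        exact h0 h2
      · rw [hmem]
        exact Or.inl ⟨_, h2, (condA_iff x y _).2 ⟨h1, rfl⟩⟩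
    · refine ⟨?_, Or.inl ?_⟩
      · intro he
        rw [he] at h2
        have := congrFun h2 (1 + y.right.toAdd)
        simp only [Pi.add_apply, eVec, if_pos rfl] at this
        exact z2_add_one_ne _ this.symm
      · rw [hmem]
        exact Or.inr ((condB_iff hφ x y).2 ⟨h1, h2⟩)

variable {G : SimpleGraph ((Multiplicative (ZMod n → ZMod 2)) ⋊[φ] Multiplicative (ZMod n))}

/-- Ordered boundary pairs. -/
private def OPairs (G : SimpleGraph ((Multiplicative (ZMod n → ZMod 2)) ⋊[φ] Multiplicative (ZMod n)))
    (X : Set ((Multiplicative (ZMod n → ZMod 2)) ⋊[φ] Multiplicative (ZMod n))) :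
    Set (((Multiplicative (ZMod n → ZMod 2)) ⋊[φ] Multiplicative (ZMod n)) ×
      ((Multiplicative (ZMod n → ZMod 2)) ⋊[φ] Multiplicative (ZMod n))) :=
  {p | p.1 ∈ X ∧ p.2 ∉ X ∧ G.Adj p.1 p.2}

private lemma boundary_ncard
    (X : Set ((Multiplicative (ZMod n → ZMod 2)) ⋊[φ] Multiplicative (ZMod n))) :
    (edgeBoundary G X).ncard = (OPairs G X).ncard := by
  have himg : edgeBoundary G X = (fun p => s(p.1, p.2)) '' (OPairs G X) := by
    ext e
    constructor
    · rintro ⟨he, u, hu, v, hv, rfl⟩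
      exact ⟨(u, v), ⟨hu, hv, (SimpleGraph.mem_edgeSet G).1 he⟩, rfl⟩
    · rintro ⟨⟨u, v⟩, ⟨hu, hv, hadj⟩, rfl⟩
      exact ⟨(SimpleGraph.mem_edgeSet G).2 hadj, u, hu, v, hv, rfl⟩
  rw [himg]
  apply Set.ncard_image_of_injOn
  rintro ⟨u, v⟩ ⟨hu, hv, -⟩ ⟨u', v'⟩ ⟨hu', hv', -⟩ h
  simp only [Sym2.eq, Sym2.rel_iff', Prod.mk.injEq, Prod.swap_prod_mk] at h
  rcases h with ⟨rfl, rfl⟩ | ⟨rfl, rfl⟩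
  · rfl
  · exact absurd hu' hv

/-- Intra-cloud boundary pairs at cloud `a`. -/
private def IntraOP (G : SimpleGraph ((Multiplicative (ZMod n → ZMod 2)) ⋊[φ] Multiplicative (ZMod n)))
    (X : Set ((Multiplicative (ZMod n → ZMod 2)) ⋊[φ] Multiplicative (ZMod n)))
    (a : ZMod n → ZMod 2) :
    Set (((Multiplicative (ZMod n → ZMod 2)) ⋊[φ] Multiplicative (ZMod n)) ×
      ((Multiplicative (ZMod n → ZMod 2)) ⋊[φ] Multiplicative (ZMod n))) :=
  {p | p ∈ OPairs G X ∧ p.1.left.toAdd = a ∧ p.2.left.toAdd = a}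

/-- Levels of cloud `a` belonging to `X`. -/
private def Ylv (φ : Multiplicative (ZMod n) →* MulAut (Multiplicative (ZMod n → ZMod 2)))
    (X : Set ((Multiplicative (ZMod n → ZMod 2)) ⋊[φ] Multiplicative (ZMod n)))
    (a : ZMod n → ZMod 2) : Set (ZMod n) :=
  {i | vmk φ a i ∈ X}

private lemma ncard_shift_set [NeZero n] (i : ZMod n) :
    {j : ZMod n | j - i ∈ SB}.ncard = SB.ncard := by
  have : {j : ZMod n | j - i ∈ SB} = (fun z => i + z) '' SB := by
    ext j
    simp only [Set.mem_setOf_eq, Set.mem_image]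
    constructor
    · intro h; exact ⟨j - i, h, by ring⟩
    · rintro ⟨z, hz, rfl⟩; simpa using hz
  rw [this, Set.ncard_image_of_injective _ (add_right_injective i)]

private lemma ncard_shift_set' [NeZero n] (j : ZMod n) :
    {i : ZMod n | j - i ∈ SB}.ncard = SB.ncard := by
  have : {i : ZMod n | j - i ∈ SB} = (fun z => j - z) '' SB := by
    ext i
    simp only [Set.mem_setOf_eq, Set.mem_image]
    constructor
    · intro h; exact ⟨j - i, h, by ring⟩
    · rintro ⟨z, hz, rfl⟩; simpa using hz
  rw [this, Set.ncard_image_of_injective _ (fun x y h => by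
    have : j - (j - x) = j - (j - y) := by rw [h]
    simpa using this)]

private lemma intra_lb1 [NeZero n]
    (hA : ∀ x y, G.Adj x y ↔
      ((x.left = y.left ∧ y.right.toAdd - x.right.toAdd ∈ SB) ∨
       (x.right = y.right ∧ y.left.toAdd = x.left.toAdd + eVec n (1 + x.right.toAdd))))
    (h0 : (0 : ZMod n) ∉ SB)
    (X : Set ((Multiplicative (ZMod n → ZMod 2)) ⋊[φ] Multiplicative (ZMod n)))
    (a : ZMod n → ZMod 2) :
    (Ylv φ X a).ncard * (SB.ncard + 1 - (Ylv φ X a).ncard) ≤ (IntraOP G X a).ncard := by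
  classical
  set Y := Ylv φ X a with hY
  set t := Y.ncard with ht
  set R : Set (ZMod n × ZMod n) := {q | q.1 ∈ Y ∧ q.2 ∉ Y ∧ q.2 - q.1 ∈ SB} with hR
  have hfib : ∀ i ∈ Y, SB.ncard + 1 - t ≤ {j | (i, j) ∈ R}.ncard := by
    intro i hi
    have hset : {j | (i, j) ∈ R} = {j : ZMod n | j - i ∈ SB} \ Y := by
      ext j; simp only [hR, Set.mem_setOf_eq, Set.mem_diff]; tauto
    have hN := ncard_shift_set (SB := SB) i
    have hsplit := Set.ncard_inter_add_ncard_diff_eq_ncard {j : ZMod n | j - i ∈ SB} Y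
      (Set.toFinite _)
    have hint : ({j : ZMod n | j - i ∈ SB} ∩ Y).ncard ≤ (Y \ {i}).ncard := by
      apply Set.ncard_le_ncard _ (Set.toFinite _)
      rintro j ⟨hj1, hj2⟩
      refine ⟨hj2, ?_⟩
      intro hji
      rw [Set.mem_singleton_iff] at hji
      subst hji
      simp only [Set.mem_setOf_eq, sub_self] at hj1
      exact h0 hj1
    have hYs : (Y \ {i}).ncard = t - 1 := by
      rw [Set.ncard_diff_singleton_of_mem hi]
    have hpos : 1 ≤ t := by
      rw [ht]
      exact (Set.ncard_pos (Set.toFinite _)).2 ⟨i, hi⟩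
    rw [hset]
    omega
  have h1 : t * (SB.ncard + 1 - t) ≤ R.ncard :=
    pcount_fiber_lb R Y _ (fun p hp => hp.1) hfib
  refine le_trans h1 ?_
  rw [← Set.ncard_image_of_injOn (f := fun q : ZMod n × ZMod n => (vmk φ a q.1, vmk φ a q.2))
    (fun q _ q' _ h => by
      simp only [Prod.mk.injEq] at h
      exact Prod.ext ((vmk_inj h.1).2) ((vmk_inj h.2).2))]
  apply Set.ncard_le_ncard _ (Set.toFinite _)
  rintro p ⟨⟨i, j⟩, ⟨hi, hj, hsb⟩, rfl⟩
  refine ⟨⟨hi, hj, ?_⟩, rfl, rfl⟩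
  rw [hA]
  exact Or.inl ⟨rfl, hsb⟩

private lemma intra_lb2 [NeZero n]
    (hA : ∀ x y, G.Adj x y ↔
      ((x.left = y.left ∧ y.right.toAdd - x.right.toAdd ∈ SB) ∨
       (x.right = y.right ∧ y.left.toAdd = x.left.toAdd + eVec n (1 + x.right.toAdd))))
    (h0 : (0 : ZMod n) ∉ SB)
    (X : Set ((Multiplicative (ZMod n → ZMod 2)) ⋊[φ] Multiplicative (ZMod n)))
    (a : ZMod n → ZMod 2) :
    (Ylv φ X a)ᶜ.ncard * (SB.ncard + 1 - (Ylv φ X a)ᶜ.ncard) ≤ (IntraOP G X a).ncard := by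
  classical
  set Y := Ylv φ X a with hY
  set t' := Yᶜ.ncard with ht'
  set R : Set (ZMod n × ZMod n) := {q | q.1 ∈ Yᶜ ∧ q.2 ∉ Yᶜ ∧ q.1 - q.2 ∈ SB} with hR
  have hfib : ∀ j ∈ Yᶜ, SB.ncard + 1 - t' ≤ {i | (j, i) ∈ R}.ncard := by
    intro j hj
    have hset : {i | (j, i) ∈ R} = {i : ZMod n | j - i ∈ SB} \ Yᶜ := by
      ext i; simp only [hR, Set.mem_setOf_eq, Set.mem_diff]; tauto
    have hN := ncard_shift_set' (SB := SB) j
    have hsplit := Set.ncard_inter_add_ncard_diff_eq_ncard {i : ZMod n | j - i ∈ SB} Yᶜ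
      (Set.toFinite _)
    have hint : ({i : ZMod n | j - i ∈ SB} ∩ Yᶜ).ncard ≤ (Yᶜ \ {j}).ncard := by
      apply Set.ncard_le_ncard _ (Set.toFinite _)
      rintro i ⟨hi1, hi2⟩
      refine ⟨hi2, ?_⟩
      intro hij
      rw [Set.mem_singleton_iff] at hij
      subst hij
      simp only [Set.mem_setOf_eq, sub_self] at hi1
      exact h0 hi1
    have hYs : (Yᶜ \ {j}).ncard = t' - 1 := by
      rw [Set.ncard_diff_singleton_of_mem hj]
    have hpos : 1 ≤ t' := by
      rw [ht']
      exact (Set.ncard_pos (Set.toFinite _)).2 ⟨j, hj⟩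
    rw [hset]
    omega
  have h1 : t' * (SB.ncard + 1 - t') ≤ R.ncard :=
    pcount_fiber_lb R Yᶜ _ (fun p hp => hp.1) hfib
  refine le_trans h1 ?_
  rw [← Set.ncard_image_of_injOn (f := fun q : ZMod n × ZMod n => (vmk φ a q.2, vmk φ a q.1))
    (fun q _ q' _ h => by
      simp only [Prod.mk.injEq] at h
      exact Prod.ext ((vmk_inj h.2).2) ((vmk_inj h.1).2))]
  apply Set.ncard_le_ncard _ (Set.toFinite _)
  rintro p ⟨⟨j, i⟩, ⟨hj, hi, hsb⟩, rfl⟩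
  have hiX : vmk φ a i ∈ X := not_not.1 hi
  refine ⟨⟨hiX, hj, ?_⟩, rfl, rfl⟩
  rw [hA]
  left
  refine ⟨rfl, ?_⟩
  show j - i ∈ SB
  exact hsb

private lemma split_intra [NeZero n]
    (hA : ∀ x y, G.Adj x y ↔
      ((x.left = y.left ∧ y.right.toAdd - x.right.toAdd ∈ SB) ∨
       (x.right = y.right ∧ y.left.toAdd = x.left.toAdd + eVec n (1 + x.right.toAdd))))
    (h0 : (0 : ZMod n) ∉ SB)
    (hlow2 : n + 1 ≤ 2 * SB.ncard) (hupp2 : SB.ncard + 2 ≤ n)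
    (X : Set ((Multiplicative (ZMod n → ZMod 2)) ⋊[φ] Multiplicative (ZMod n)))
    (a : ZMod n → ZMod 2)
    (hs1 : ∃ i, vmk φ a i ∈ X) (hs2 : ∃ i, vmk φ a i ∉ X) :
    SB.ncard ≤ (IntraOP G X a).ncard := by
  classical
  have hcardZ : (Ylv φ X a).ncard + (Ylv φ X a)ᶜ.ncard = n := by
    rw [Set.ncard_add_ncard_compl _ (Set.toFinite _) (Set.toFinite _), Nat.card_zmod]
  set t := (Ylv φ X a).ncard with ht
  set t' := (Ylv φ X a)ᶜ.ncard with ht'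
  have hpos : 1 ≤ t := by
    obtain ⟨i, hi⟩ := hs1
    exact (Set.ncard_pos (Set.toFinite _)).2 ⟨i, hi⟩
  have hpos' : 1 ≤ t' := by
    obtain ⟨i, hi⟩ := hs2
    exact (Set.ncard_pos (Set.toFinite _)).2 ⟨i, hi⟩
  by_cases hcase : t ≤ SB.ncard
  · exact le_trans (arith1 t SB.ncard hpos hcase) (intra_lb1 hA h0 X a)
  · have h1 : t' ≤ SB.ncard := by omega
    exact le_trans (arith1 t' SB.ncard hpos' h1) (intra_lb2 hA h0 X a)

/-- The set of full-`X` clouds. -/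
private def PsetOf (φ : Multiplicative (ZMod n) →* MulAut (Multiplicative (ZMod n → ZMod 2)))
    (X : Set ((Multiplicative (ZMod n → ZMod 2)) ⋊[φ] Multiplicative (ZMod n))) :
    Set (ZMod n → ZMod 2) :=
  {a | ∀ i, vmk φ a i ∈ X}

/-- The set of full-`Xᶜ` clouds. -/
private def QsetOf (φ : Multiplicative (ZMod n) →* MulAut (Multiplicative (ZMod n → ZMod 2)))
    (X : Set ((Multiplicative (ZMod n → ZMod 2)) ⋊[φ] Multiplicative (ZMod n))) :
    Set (ZMod n → ZMod 2) :=
  {a | ∀ i, vmk φ a i ∉ X}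

/-- The set of split clouds. -/
private def SplOf (φ : Multiplicative (ZMod n) →* MulAut (Multiplicative (ZMod n → ZMod 2)))
    (X : Set ((Multiplicative (ZMod n → ZMod 2)) ⋊[φ] Multiplicative (ZMod n))) :
    Set (ZMod n → ZMod 2) :=
  {a | (∃ i, vmk φ a i ∈ X) ∧ (∃ i, vmk φ a i ∉ X)}

private lemma trich
    (X : Set ((Multiplicative (ZMod n → ZMod 2)) ⋊[φ] Multiplicative (ZMod n)))
    (a : ZMod n → ZMod 2) : a ∈ PsetOf φ X ∨ a ∈ QsetOf φ X ∨ a ∈ SplOf φ X := by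
  classical
  by_cases h1 : ∀ i, vmk φ a i ∈ X
  · exact Or.inl h1
  · push_neg at h1
    by_cases h2 : ∀ i, vmk φ a i ∉ X
    · exact Or.inr (Or.inl h2)
    · push_neg at h2
      exact Or.inr (Or.inr ⟨h2, h1⟩)

private lemma P_not_Q [NeZero n] {X : Set ((Multiplicative (ZMod n → ZMod 2)) ⋊[φ] Multiplicative (ZMod n))}
    {a : ZMod n → ZMod 2} (hP : a ∈ PsetOf φ X) : a ∉ QsetOf φ X :=
  fun hQ => hQ 0 (hP 0)

private lemma P_not_Spl {X : Set ((Multiplicative (ZMod n → ZMod 2)) ⋊[φ] Multiplicative (ZMod n))}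
    {a : ZMod n → ZMod 2} (hP : a ∈ PsetOf φ X) : a ∉ SplOf φ X :=
  fun hS => by obtain ⟨i, hi⟩ := hS.2; exact hi (hP i)

private lemma Q_not_Spl {X : Set ((Multiplicative (ZMod n → ZMod 2)) ⋊[φ] Multiplicative (ZMod n))}
    {a : ZMod n → ZMod 2} (hQ : a ∈ QsetOf φ X) : a ∉ SplOf φ X :=
  fun hS => by obtain ⟨i, hi⟩ := hS.1; exact hQ i hi

private lemma cloud_ncard [NeZero n] (a : ZMod n → ZMod 2) :
    ({p : (Multiplicative (ZMod n → ZMod 2)) ⋊[φ] Multiplicative (ZMod n) |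
      p.left.toAdd = a}).ncard = n := by
  have : {p : (Multiplicative (ZMod n → ZMod 2)) ⋊[φ] Multiplicative (ZMod n) |
      p.left.toAdd = a} = (fun i => vmk φ a i) '' Set.univ := by
    ext p
    simp only [Set.mem_setOf_eq, Set.image_univ, Set.mem_range]
    constructor
    · intro h
      exact ⟨p.right.toAdd, by rw [← h, vmk_eta]⟩
    · rintro ⟨i, rfl⟩
      rfl
  rw [this, Set.ncard_image_of_injective _ (fun i j h => (vmk_inj h).2), Set.ncard_univ,
    Nat.card_zmod]

private lemma madj [NeZero n]
    (hA : ∀ x y, G.Adj x y ↔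
      ((x.left = y.left ∧ y.right.toAdd - x.right.toAdd ∈ SB) ∨
       (x.right = y.right ∧ y.left.toAdd = x.left.toAdd + eVec n (1 + x.right.toAdd))))
    (a : ZMod n → ZMod 2) {i j : ZMod n} (hji : j = 1 + i) :
    G.Adj (vmk φ a i) (vmk φ (a + hunit j) i) := by
  rw [hA]
  right
  refine ⟨rfl, ?_⟩
  show a + hunit j = a + eVec n (1 + i)
  rw [eVec_eq_hunit, hji]

private lemma madj' [NeZero n]
    (hA : ∀ x y, G.Adj x y ↔
      ((x.left = y.left ∧ y.right.toAdd - x.right.toAdd ∈ SB) ∨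
       (x.right = y.right ∧ y.left.toAdd = x.left.toAdd + eVec n (1 + x.right.toAdd))))
    (a : ZMod n → ZMod 2) {i j : ZMod n} (hji : j = 1 + i) :
    G.Adj (vmk φ (a + hunit j) i) (vmk φ a i) := by
  have h := (madj hA (a + hunit j) hji : G.Adj _ (vmk φ (a + hunit j + hunit j) i))
  rw [add_hunit_add_hunit] at h
  exact h

private lemma intra_sub_OP
    {X : Set ((Multiplicative (ZMod n → ZMod 2)) ⋊[φ] Multiplicative (ZMod n))}
    {a : ZMod n → ZMod 2} : IntraOP G X a ⊆ OPairs G X := fun _ hp => hp.1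

private lemma match_bound1 [NeZero n]
    (hA : ∀ x y, G.Adj x y ↔
      ((x.left = y.left ∧ y.right.toAdd - x.right.toAdd ∈ SB) ∨
       (x.right = y.right ∧ y.left.toAdd = x.left.toAdd + eVec n (1 + x.right.toAdd))))
    (X : Set ((Multiplicative (ZMod n → ZMod 2)) ⋊[φ] Multiplicative (ZMod n)))
    (W : Set ((ZMod n → ZMod 2) × ZMod n)) (a : ZMod n → ZMod 2)
    (hW : ∀ q ∈ W, vmk φ q.1 (q.2 - 1) ∈ X ∧ vmk φ (q.1 + hunit q.2) (q.2 - 1) ∉ X ∧ q.1 ≠ a) :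
    (IntraOP G X a).ncard + W.ncard ≤ (OPairs G X).ncard := by
  classical
  have hinj : Set.InjOn (fun q : (ZMod n → ZMod 2) × ZMod n =>
      (vmk φ q.1 (q.2 - 1), vmk φ (q.1 + hunit q.2) (q.2 - 1))) W := by
    intro q _ q' _ h
    simp only [Prod.mk.injEq] at h
    obtain ⟨h1, h2⟩ := vmk_inj h.1
    have h3 : q.2 = q'.2 := by
      have := sub_left_inj.1 h2
      exact this
    exact Prod.ext h1 h3
  have hsub : (fun q : (ZMod n → ZMod 2) × ZMod n =>
      (vmk φ q.1 (q.2 - 1), vmk φ (q.1 + hunit q.2) (q.2 - 1))) '' W ⊆ OPairs G X := by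
    rintro p ⟨q, hq, rfl⟩
    obtain ⟨hq1, hq2, _⟩ := hW q hq
    exact ⟨hq1, hq2, madj hA q.1 (by ring)⟩
  have hdisj : Disjoint (IntraOP G X a) ((fun q : (ZMod n → ZMod 2) × ZMod n =>
      (vmk φ q.1 (q.2 - 1), vmk φ (q.1 + hunit q.2) (q.2 - 1))) '' W) := by
    rw [Set.disjoint_left]
    rintro p ⟨_, hp1, _⟩ ⟨q, hq, rfl⟩
    exact (hW q hq).2.2 hp1
  have := ncard_lb_two intra_sub_OP hsub hdisj
  rwa [Set.ncard_image_of_injOn hinj] at this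

private lemma match_bound2 [NeZero n]
    (hA : ∀ x y, G.Adj x y ↔
      ((x.left = y.left ∧ y.right.toAdd - x.right.toAdd ∈ SB) ∨
       (x.right = y.right ∧ y.left.toAdd = x.left.toAdd + eVec n (1 + x.right.toAdd))))
    (X : Set ((Multiplicative (ZMod n → ZMod 2)) ⋊[φ] Multiplicative (ZMod n)))
    (W : Set ((ZMod n → ZMod 2) × ZMod n)) (a : ZMod n → ZMod 2)
    (hW : ∀ q ∈ W, vmk φ (q.1 + hunit q.2) (q.2 - 1) ∈ X ∧ vmk φ q.1 (q.2 - 1) ∉ X ∧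
      q.1 + hunit q.2 ≠ a) :
    (IntraOP G X a).ncard + W.ncard ≤ (OPairs G X).ncard := by
  classical
  have hinj : Set.InjOn (fun q : (ZMod n → ZMod 2) × ZMod n =>
      (vmk φ (q.1 + hunit q.2) (q.2 - 1), vmk φ q.1 (q.2 - 1))) W := by
    intro q _ q' _ h
    simp only [Prod.mk.injEq] at h
    obtain ⟨h1, h2⟩ := vmk_inj h.2
    exact Prod.ext h1 (sub_left_inj.1 h2)
  have hsub : (fun q : (ZMod n → ZMod 2) × ZMod n =>
      (vmk φ (q.1 + hunit q.2) (q.2 - 1), vmk φ q.1 (q.2 - 1))) '' W ⊆ OPairs G X := by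
    rintro p ⟨q, hq, rfl⟩
    obtain ⟨hq1, hq2, _⟩ := hW q hq
    exact ⟨hq1, hq2, madj' hA q.1 (by ring)⟩
  have hdisj : Disjoint (IntraOP G X a) ((fun q : (ZMod n → ZMod 2) × ZMod n =>
      (vmk φ (q.1 + hunit q.2) (q.2 - 1), vmk φ q.1 (q.2 - 1))) '' W) := by
    rw [Set.disjoint_left]
    rintro p ⟨_, hp1, _⟩ ⟨q, hq, rfl⟩
    exact (hW q hq).2.2 hp1
  have := ncard_lb_two intra_sub_OP hsub hdisj
  rwa [Set.ncard_image_of_injOn hinj] at this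

private lemma match_bound3 [NeZero n]
    (hA : ∀ x y, G.Adj x y ↔
      ((x.left = y.left ∧ y.right.toAdd - x.right.toAdd ∈ SB) ∨
       (x.right = y.right ∧ y.left.toAdd = x.left.toAdd + eVec n (1 + x.right.toAdd))))
    (X : Set ((Multiplicative (ZMod n → ZMod 2)) ⋊[φ] Multiplicative (ZMod n)))
    (W : Set (ZMod n)) (a : ZMod n → ZMod 2)
    (hW : ∀ i ∈ W, vmk φ (a + hunit (1 + i)) i ∈ X ∧ vmk φ a i ∉ X) :
    (IntraOP G X a).ncard + W.ncard ≤ (OPairs G X).ncard := by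
  classical
  have hinj : Set.InjOn (fun i : ZMod n =>
      (vmk φ (a + hunit (1 + i)) i, vmk φ a i)) W := by
    intro i _ i' _ h
    simp only [Prod.mk.injEq] at h
    exact (vmk_inj h.2).2
  have hsub : (fun i : ZMod n => (vmk φ (a + hunit (1 + i)) i, vmk φ a i)) '' W ⊆
      OPairs G X := by
    rintro p ⟨i, hi, rfl⟩
    obtain ⟨h1, h2⟩ := hW i hi
    exact ⟨h1, h2, madj' hA a rfl⟩
  have hdisj : Disjoint (IntraOP G X a)
      ((fun i : ZMod n => (vmk φ (a + hunit (1 + i)) i, vmk φ a i)) '' W) := by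
    rw [Set.disjoint_left]
    rintro p ⟨_, hp1, _⟩ ⟨i, hi, rfl⟩
    exact add_hunit_ne a (1 + i) hp1
  have := ncard_lb_two intra_sub_OP hsub hdisj
  rwa [Set.ncard_image_of_injOn hinj] at this

private lemma match_bound4 [NeZero n]
    (hA : ∀ x y, G.Adj x y ↔
      ((x.left = y.left ∧ y.right.toAdd - x.right.toAdd ∈ SB) ∨
       (x.right = y.right ∧ y.left.toAdd = x.left.toAdd + eVec n (1 + x.right.toAdd))))
    (X : Set ((Multiplicative (ZMod n → ZMod 2)) ⋊[φ] Multiplicative (ZMod n)))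
    (W : Set (ZMod n)) (a : ZMod n → ZMod 2)
    (hW : ∀ i ∈ W, vmk φ a i ∈ X ∧ vmk φ (a + hunit (1 + i)) i ∉ X) :
    (IntraOP G X a).ncard + W.ncard ≤ (OPairs G X).ncard := by
  classical
  have hinj : Set.InjOn (fun i : ZMod n =>
      (vmk φ a i, vmk φ (a + hunit (1 + i)) i)) W := by
    intro i _ i' _ h
    simp only [Prod.mk.injEq] at h
    exact (vmk_inj h.1).2
  have hsub : (fun i : ZMod n => (vmk φ a i, vmk φ (a + hunit (1 + i)) i)) '' W ⊆
      OPairs G X := by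
    rintro p ⟨i, hi, rfl⟩
    obtain ⟨h1, h2⟩ := hW i hi
    exact ⟨h1, h2, madj hA a rfl⟩
  have hdisj : Disjoint (IntraOP G X a)
      ((fun i : ZMod n => (vmk φ a i, vmk φ (a + hunit (1 + i)) i)) '' W) := by
    rw [Set.disjoint_left]
    rintro p ⟨_, _, hp2⟩ ⟨i, hi, rfl⟩
    exact add_hunit_ne a (1 + i) hp2
  have := ncard_lb_two intra_sub_OP hsub hdisj
  rwa [Set.ncard_image_of_injOn hinj] at this

private lemma mem_Ylv {X : Set ((Multiplicative (ZMod n → ZMod 2)) ⋊[φ] Multiplicative (ZMod n))}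
    {a : ZMod n → ZMod 2} {i : ZMod n} : i ∈ Ylv φ X a ↔ vmk φ a i ∈ X := Iff.rfl

private lemma main_comb [NeZero n]
    (hA : ∀ x y, G.Adj x y ↔
      ((x.left = y.left ∧ y.right.toAdd - x.right.toAdd ∈ SB) ∨
       (x.right = y.right ∧ y.left.toAdd = x.left.toAdd + eVec n (1 + x.right.toAdd))))
    (h0 : (0 : ZMod n) ∉ SB)
    (hn : 3 ≤ n) (hlow2 : n + 1 ≤ 2 * SB.ncard) (hupp2 : SB.ncard + 2 ≤ n)
    (X : Set ((Multiplicative (ZMod n → ZMod 2)) ⋊[φ] Multiplicative (ZMod n)))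
    (hne : X.Nonempty) (hne' : Xᶜ.Nonempty)
    (hX1 : ∀ v ∈ X, ∃ w ∈ X, G.Adj v w)
    (hX2 : ∀ v ∈ Xᶜ, ∃ w ∈ Xᶜ, G.Adj v w) :
    n ≤ (OPairs G X).ncard ∧
      ((OPairs G X).ncard ≤ n → X.ncard ≤ n →
        ∃ a, X = {p : (Multiplicative (ZMod n → ZMod 2)) ⋊[φ] Multiplicative (ZMod n) |
          p.left.toAdd = a}) := by
  classical
  have hZcard : ∀ Y : Set (ZMod n), Y.ncard + Yᶜ.ncard = n := by
    intro Y
    rw [Set.ncard_add_ncard_compl _ (Set.toFinite _) (Set.toFinite _), Nat.card_zmod]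
  have hunivcard : (Finset.univ : Finset (ZMod n)).card = n := by
    rw [Finset.card_univ, ZMod.card]
  by_cases hS2 : ∃ a₁ ∈ SplOf φ X, ∃ a₂ ∈ SplOf φ X, a₁ ≠ a₂
  · -- Case A : two split clouds
    obtain ⟨a₁, ha₁, a₂, ha₂, h12⟩ := hS2
    have h1 : SB.ncard ≤ (IntraOP G X a₁).ncard := split_intra hA h0 hlow2 hupp2 X a₁ ha₁.1 ha₁.2
    have h2 : SB.ncard ≤ (IntraOP G X a₂).ncard := split_intra hA h0 hlow2 hupp2 X a₂ ha₂.1 ha₂.2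
    have hd : Disjoint (IntraOP G X a₁) (IntraOP G X a₂) := by
      rw [Set.disjoint_left]
      rintro p ⟨-, hp1, -⟩ ⟨-, hp1', -⟩
      exact h12 (hp1 ▸ hp1')
    have := ncard_lb_two (intra_sub_OP (a := a₁)) (intra_sub_OP (a := a₂)) hd
    constructor
    · omega
    · intro hOP _
      omega
  · by_cases hS1 : (SplOf φ X).Nonempty
    · obtain ⟨a, ha⟩ := hS1
      have huniq : ∀ a' ∈ SplOf φ X, a' = a := by
        intro a' ha'
        by_contra hcon
        exact hS2 ⟨a', ha', a, ha, hcon⟩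
      have hintra : SB.ncard ≤ (IntraOP G X a).ncard :=
        split_intra hA h0 hlow2 hupp2 X a ha.1 ha.2
      by_cases hQ0 : QsetOf φ X = ∅
      · -- Case C2 : Q empty, Xᶜ ⊆ cloud a
        have hXc : ∀ v : (Multiplicative (ZMod n → ZMod 2)) ⋊[φ] Multiplicative (ZMod n),
            v ∉ X → v.left.toAdd = a := by
          intro v hv
          rcases trich X v.left.toAdd with h | h | h
          · exact absurd (h v.right.toAdd) hv
          · rw [hQ0] at h; exact absurd h (Set.notMem_empty _)
          · exact huniq _ h
        have hclne : ∀ j : ZMod n, a + hunit j ∈ PsetOf φ X := by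
          intro j
          rcases trich X (a + hunit j) with h | h | h
          · exact h
          · rw [hQ0] at h; exact absurd h (Set.notMem_empty _)
          · exact absurd (huniq _ h) (add_hunit_ne a j)
        -- t' ≥ 2
        obtain ⟨i₀, hi₀⟩ := ha.2
        obtain ⟨w, hw, hadj⟩ := hX2 (vmk φ a i₀) hi₀
        have hwa : w.left.toAdd = a := hXc w hw
        have hj : ∃ j, j ≠ i₀ ∧ vmk φ a j ∉ X := by
          rw [hA] at hadj
          rcases hadj with ⟨h1, h2⟩ | ⟨h1, h2⟩
          · refine ⟨w.right.toAdd, ?_, ?_⟩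
            · intro hji
              have h2' : w.right.toAdd - i₀ ∈ SB := h2
              rw [hji, sub_self] at h2'
              exact h0 h2'
            · rw [← hwa, vmk_eta]; exact hw
          · exfalso
            have h2' : w.left.toAdd = a + eVec n (1 + i₀) := h2
            rw [hwa] at h2'
            exact add_hunit_ne a (1 + i₀) h2'.symm
        obtain ⟨j₀, hj₀ne, hj₀⟩ := hj
        have ht'2 : 2 ≤ (Ylv φ X a)ᶜ.ncard := by
          have hsub : ({i₀, j₀} : Set (ZMod n)) ⊆ (Ylv φ X a)ᶜ := by
            rintro i (rfl | hi)
            · exact hi₀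
            · rw [Set.mem_singleton_iff] at hi; subst hi; exact hj₀
          calc 2 = ({i₀, j₀} : Set (ZMod n)).ncard := (Set.ncard_pair hj₀ne.symm ▸ rfl)
            _ ≤ _ := Set.ncard_le_ncard hsub (Set.toFinite _)
        have hmb := match_bound3 hA X ((Ylv φ X a)ᶜ) a (fun i hi =>
          ⟨(hclne (1 + i)) i, hi⟩)
        have hOPbig : n + 1 ≤ (OPairs G X).ncard := by
          by_cases hcase : (Ylv φ X a)ᶜ.ncard ≤ SB.ncard
          · have := intra_lb2 hA h0 X a
            have harith := arith2 ((Ylv φ X a)ᶜ.ncard) SB.ncard ht'2 hcase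
            omega
          · have hcard := hZcard (Ylv φ X a)
            have ht1 : 1 ≤ (Ylv φ X a).ncard := by
              obtain ⟨i, hi⟩ := ha.1
              exact (Set.ncard_pos (Set.toFinite _)).2 ⟨i, hi⟩
            have := intra_lb1 hA h0 X a
            have harith := arith1 (Ylv φ X a).ncard SB.ncard ht1 (by omega)
            omega
        exact ⟨by omega, fun hOP _ => by omega⟩
      · by_cases hP0 : PsetOf φ X = ∅
        · -- Case C3 : P empty, X ⊆ cloud a
          have hXs : ∀ v : (Multiplicative (ZMod n → ZMod 2)) ⋊[φ] Multiplicative (ZMod n),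
              v ∈ X → v.left.toAdd = a := by
            intro v hv
            rcases trich X v.left.toAdd with h | h | h
            · rw [hP0] at h; exact absurd h (Set.notMem_empty _)
            · exact absurd hv (by rw [← vmk_eta v]; exact h v.right.toAdd)
            · exact huniq _ h
          have hclne : ∀ j : ZMod n, a + hunit j ∈ QsetOf φ X := by
            intro j
            rcases trich X (a + hunit j) with h | h | h
            · rw [hP0] at h; exact absurd h (Set.notMem_empty _)
            · exact h
            · exact absurd (huniq _ h) (add_hunit_ne a j)
          obtain ⟨i₀, hi₀⟩ := ha.1
          obtain ⟨w, hw, hadj⟩ := hX1 (vmk φ a i₀) hi₀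
          have hwa : w.left.toAdd = a := hXs w hw
          have hj : ∃ j, j ≠ i₀ ∧ vmk φ a j ∈ X := by
            rw [hA] at hadj
            rcases hadj with ⟨h1, h2⟩ | ⟨h1, h2⟩
            · refine ⟨w.right.toAdd, ?_, ?_⟩
              · intro hji
                have h2' : w.right.toAdd - i₀ ∈ SB := h2
                rw [hji, sub_self] at h2'
                exact h0 h2'
              · rw [← hwa, vmk_eta]; exact hw
            · exfalso
              have h2' : w.left.toAdd = a + eVec n (1 + i₀) := h2
              rw [hwa] at h2'
              exact add_hunit_ne a (1 + i₀) h2'.symm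
          obtain ⟨j₀, hj₀ne, hj₀⟩ := hj
          have ht2 : 2 ≤ (Ylv φ X a).ncard := by
            have hsub : ({i₀, j₀} : Set (ZMod n)) ⊆ Ylv φ X a := by
              rintro i (rfl | hi)
              · exact hi₀
              · rw [Set.mem_singleton_iff] at hi; subst hi; exact hj₀
            calc 2 = ({i₀, j₀} : Set (ZMod n)).ncard := (Set.ncard_pair hj₀ne.symm ▸ rfl)
              _ ≤ _ := Set.ncard_le_ncard hsub (Set.toFinite _)
          have hmb := match_bound4 hA X (Ylv φ X a) a (fun i hi =>
            ⟨hi, (hclne (1 + i)) i⟩)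
          have hOPbig : n + 1 ≤ (OPairs G X).ncard := by
            by_cases hcase : (Ylv φ X a).ncard ≤ SB.ncard
            · have := intra_lb1 hA h0 X a
              have harith := arith2 ((Ylv φ X a).ncard) SB.ncard ht2 hcase
              omega
            · have hcard := hZcard (Ylv φ X a)
              have ht1 : 1 ≤ (Ylv φ X a)ᶜ.ncard := by
                obtain ⟨i, hi⟩ := ha.2
                exact (Set.ncard_pos (Set.toFinite _)).2 ⟨i, hi⟩
              have := intra_lb2 hA h0 X a
              have harith := arith1 ((Ylv φ X a)ᶜ.ncard) SB.ncard ht1 (by omega)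
              omega
          exact ⟨by omega, fun hOP _ => by omega⟩
        · -- Case C1 : P and Q nonempty, one split cloud
          obtain ⟨a₀, ha₀⟩ := Set.nonempty_iff_ne_empty.2 hP0
          obtain ⟨b₀, hb₀⟩ := Set.nonempty_iff_ne_empty.2 hQ0
          have haP : a ∉ PsetOf φ X := fun h => P_not_Spl h ha
          have haQ : a ∉ QsetOf φ X := fun h => Q_not_Spl h ha
          have hPQ : ∀ j : ZMod n, a + hunit j ∈ PsetOf φ X ∨ a + hunit j ∈ QsetOf φ X := by
            intro j
            rcases trich X (a + hunit j) with h | h | h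
            · exact Or.inl h
            · exact Or.inr h
            · exact absurd (huniq _ h) (add_hunit_ne a j)
          have hcompl : {j : ZMod n | a + hunit j ∈ QsetOf φ X} =
              {j : ZMod n | a + hunit j ∈ PsetOf φ X}ᶜ := by
            ext j
            simp only [Set.mem_setOf_eq, Set.mem_compl_iff]
            constructor
            · intro hq hp
              exact (P_not_Q hp) hq
            · intro hp
              exact (hPQ j).resolve_left hp
          set p := {j : ZMod n | a + hunit j ∈ PsetOf φ X}.ncard with hp
          set q := {j : ZMod n | a + hunit j ∈ QsetOf φ X}.ncard with hq
          have hpq : p + q = n := by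
            rw [hq, hcompl]
            exact hZcard _
          have hbranch : p + 1 ≤ SB.ncard ∨ q + 1 ≤ SB.ncard := by omega
          have hOPbig : n + 1 ≤ (OPairs G X).ncard := by
            rcases hbranch with hbr | hbr
            · -- count crossings from the P side
              have hhyp := hyper_main (P := PsetOf φ X) Finset.univ a₀ a ha₀ haP
                (fun i hi => absurd (Finset.mem_univ i) hi)
              rw [hunivcard] at hhyp
              set HC := HCross (PsetOf φ X) Finset.univ a₀ with hHC
              set HCa := {q' ∈ HC | q'.1 + hunit q'.2 = a} with hHCa
              set HCb := {q' ∈ HC | q'.1 + hunit q'.2 ≠ a} with hHCb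
              have hcover : HC ⊆ HCa ∪ HCb := by
                intro q' hq'
                by_cases h : q'.1 + hunit q'.2 = a
                · exact Or.inl ⟨hq', h⟩
                · exact Or.inr ⟨hq', h⟩
              have hHCcard : HC.ncard ≤ HCa.ncard + HCb.ncard :=
                le_trans (Set.ncard_le_ncard hcover (Set.toFinite _)) (Set.ncard_union_le _ _)
              have hHCacard : HCa.ncard ≤ p := by
                rw [← Set.ncard_image_of_injOn (f := Prod.snd) (s := HCa) ?hinj]
                case hinj =>
                  rintro q' ⟨hq', he⟩ q'' ⟨hq'', he'⟩ hsnd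
                  have h1 : q'.1 = a + hunit q'.2 := by
                    rw [← he, add_hunit_add_hunit]
                  have h2 : q''.1 = a + hunit q''.2 := by
                    rw [← he', add_hunit_add_hunit]
                  have : q'.1 = q''.1 := by rw [h1, h2, hsnd]
                  exact Prod.ext this hsnd
                apply Set.ncard_le_ncard _ (Set.toFinite _)
                rintro j ⟨q', ⟨hq', he⟩, rfl⟩
                show a + hunit q'.2 ∈ PsetOf φ X
                have : q'.1 = a + hunit q'.2 := by rw [← he, add_hunit_add_hunit]
                rw [← this]
                exact hq'.2.1
              have hW : ∀ q' ∈ HCb, vmk φ q'.1 (q'.2 - 1) ∈ X ∧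
                  vmk φ (q'.1 + hunit q'.2) (q'.2 - 1) ∉ X ∧ q'.1 ≠ a := by
                rintro q' ⟨⟨-, hq1, hq2, -⟩, hne2⟩
                refine ⟨hq1 _, ?_, ?_⟩
                · rcases trich X (q'.1 + hunit q'.2) with h | h | h
                  · exact absurd h hq2
                  · exact h _
                  · exact absurd (huniq _ h) hne2
                · intro hcon
                  rw [hcon] at hq1
                  exact haP hq1
              have hmb := match_bound1 hA X HCb a hW
              omega
            · -- count crossings from the Q side
              have hhyp := hyper_main (P := QsetOf φ X) Finset.univ b₀ a hb₀ haQ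
                (fun i hi => absurd (Finset.mem_univ i) hi)
              rw [hunivcard] at hhyp
              set HC := HCross (QsetOf φ X) Finset.univ b₀ with hHC
              set HCa := {q' ∈ HC | q'.1 + hunit q'.2 = a} with hHCa
              set HCb := {q' ∈ HC | q'.1 + hunit q'.2 ≠ a} with hHCb
              have hcover : HC ⊆ HCa ∪ HCb := by
                intro q' hq'
                by_cases h : q'.1 + hunit q'.2 = a
                · exact Or.inl ⟨hq', h⟩
                · exact Or.inr ⟨hq', h⟩
              have hHCcard : HC.ncard ≤ HCa.ncard + HCb.ncard :=
                le_trans (Set.ncard_le_ncard hcover (Set.toFinite _)) (Set.ncard_union_le _ _)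
              have hHCacard : HCa.ncard ≤ q := by
                rw [← Set.ncard_image_of_injOn (f := Prod.snd) (s := HCa) ?hinj]
                case hinj =>
                  rintro q' ⟨hq', he⟩ q'' ⟨hq'', he'⟩ hsnd
                  have h1 : q'.1 = a + hunit q'.2 := by
                    rw [← he, add_hunit_add_hunit]
                  have h2 : q''.1 = a + hunit q''.2 := by
                    rw [← he', add_hunit_add_hunit]
                  have : q'.1 = q''.1 := by rw [h1, h2, hsnd]
                  exact Prod.ext this hsnd
                apply Set.ncard_le_ncard _ (Set.toFinite _)
                rintro j ⟨q', ⟨hq', he⟩, rfl⟩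
                show a + hunit q'.2 ∈ QsetOf φ X
                have : q'.1 = a + hunit q'.2 := by rw [← he, add_hunit_add_hunit]
                rw [← this]
                exact hq'.2.1
              have hW : ∀ q' ∈ HCb, vmk φ (q'.1 + hunit q'.2) (q'.2 - 1) ∈ X ∧
                  vmk φ q'.1 (q'.2 - 1) ∉ X ∧ q'.1 + hunit q'.2 ≠ a := by
                rintro q' ⟨⟨-, hq1, hq2, -⟩, hne2⟩
                have hP' : q'.1 + hunit q'.2 ∈ PsetOf φ X := by
                  rcases trich X (q'.1 + hunit q'.2) with h | h | h
                  · exact h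
                  · exact absurd h hq2
                  · exact absurd (huniq _ h) hne2
                exact ⟨hP' _, hq1 _, fun hcon => haP (hcon ▸ hP')⟩
              have hmb := match_bound2 hA X HCb a hW
              omega
          exact ⟨by omega, fun hOP _ => by omega⟩
    · -- Case B : no split clouds
      have hnos : SplOf φ X = ∅ := Set.not_nonempty_iff_eq_empty.1 hS1
      have hPa : ∀ x : (Multiplicative (ZMod n → ZMod 2)) ⋊[φ] Multiplicative (ZMod n),
          x ∈ X → x.left.toAdd ∈ PsetOf φ X := by
        intro x hx
        rcases trich X x.left.toAdd with h | h | h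
        · exact h
        · exact absurd hx (h x.right.toAdd)
        · rw [hnos] at h; exact absurd h (Set.notMem_empty _)
      have hQa : ∀ x : (Multiplicative (ZMod n → ZMod 2)) ⋊[φ] Multiplicative (ZMod n),
          x ∉ X → x.left.toAdd ∈ QsetOf φ X := by
        intro x hx
        rcases trich X x.left.toAdd with h | h | h
        · exact absurd (h x.right.toAdd) hx
        · exact h
        · rw [hnos] at h; exact absurd h (Set.notMem_empty _)
      obtain ⟨x₀, hx₀⟩ := hne
      obtain ⟨y₀, hy₀⟩ := hne'
      have ha₀ := hPa x₀ hx₀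
      have hb₀ := hQa y₀ hy₀
      have hhyp := hyper_main (P := PsetOf φ X) Finset.univ x₀.left.toAdd y₀.left.toAdd
        ha₀ (fun h => (P_not_Q h) hb₀) (fun i hi => absurd (Finset.mem_univ i) hi)
      rw [hunivcard] at hhyp
      have hW : ∀ q' ∈ HCross (PsetOf φ X) Finset.univ x₀.left.toAdd,
          vmk φ q'.1 (q'.2 - 1) ∈ X ∧
          vmk φ (q'.1 + hunit q'.2) (q'.2 - 1) ∉ X ∧ q'.1 ≠ y₀.left.toAdd := by
        rintro q' ⟨-, hq1, hq2, -⟩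
        refine ⟨hq1 _, ?_, ?_⟩
        · rcases trich X (q'.1 + hunit q'.2) with h | h | h
          · exact absurd h hq2
          · exact h _
          · rw [hnos] at h; exact absurd h (Set.notMem_empty _)
        · intro hcon
          rw [hcon] at hq1
          exact (P_not_Q hq1) hb₀
      have hmb := match_bound1 hA X _ y₀.left.toAdd hW
      refine ⟨by omega, ?_⟩
      intro hOP hXn
      by_cases htwo : ∃ a₁ ∈ PsetOf φ X, ∃ a₂ ∈ PsetOf φ X, a₁ ≠ a₂
      · exfalso
        obtain ⟨a₁, ha₁, a₂, ha₂, h12⟩ := htwo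
        have hsub : {p : (Multiplicative (ZMod n → ZMod 2)) ⋊[φ] Multiplicative (ZMod n) |
            p.left.toAdd = a₁} ∪ {p | p.left.toAdd = a₂} ⊆ X := by
          rintro p (hp | hp)
          · rw [← vmk_eta p, hp]; exact ha₁ _
          · rw [← vmk_eta p, hp]; exact ha₂ _
        have hdisj : Disjoint
            {p : (Multiplicative (ZMod n → ZMod 2)) ⋊[φ] Multiplicative (ZMod n) |
              p.left.toAdd = a₁} {p | p.left.toAdd = a₂} := by
          rw [Set.disjoint_left]
          rintro p hp1 hp2
          exact h12 (hp1 ▸ hp2)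
        have hcu : ({p : (Multiplicative (ZMod n → ZMod 2)) ⋊[φ] Multiplicative (ZMod n) |
            p.left.toAdd = a₁} ∪ {p | p.left.toAdd = a₂}).ncard = 2 * n := by
          rw [Set.ncard_union_eq hdisj (Set.toFinite _) (Set.toFinite _),
            cloud_ncard, cloud_ncard]
          omega
        have := Set.ncard_le_ncard hsub (Set.toFinite _)
        omega
      · push_neg at htwo
        refine ⟨x₀.left.toAdd, ?_⟩
        ext x
        simp only [Set.mem_setOf_eq]
        constructor
        · intro hx
          exact htwo _ (hPa x hx) _ ha₀
        · intro hx
          rw [← vmk_eta x, hx]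
          exact ha₀ _

private lemma cut_lb [NeZero n]
    (hA : ∀ x y, G.Adj x y ↔
      ((x.left = y.left ∧ y.right.toAdd - x.right.toAdd ∈ SB) ∨
       (x.right = y.right ∧ y.left.toAdd = x.left.toAdd + eVec n (1 + x.right.toAdd))))
    (h0 : (0 : ZMod n) ∉ SB)
    (hn : 3 ≤ n) (hlow2 : n + 1 ≤ 2 * SB.ncard) (hupp2 : SB.ncard + 2 ≤ n)
    (F : Set (Sym2 ((Multiplicative (ZMod n → ZMod 2)) ⋊[φ] Multiplicative (ZMod n))))
    (hF : IsRestrictedEdgeCut G F) : n ≤ F.ncard := by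
  classical
  obtain ⟨hFsub, hdis, hiso⟩ := hF
  have hVne : Nonempty ((Multiplicative (ZMod n → ZMod 2)) ⋊[φ] Multiplicative (ZMod n)) := ⟨1⟩
  have hpre : ¬ (G.deleteEdges F).Preconnected := fun h => hdis ⟨h⟩
  rw [SimpleGraph.Preconnected] at hpre
  push_neg at hpre
  obtain ⟨u, v, huv⟩ := hpre
  set X := {w : (Multiplicative (ZMod n → ZMod 2)) ⋊[φ] Multiplicative (ZMod n) |
    (G.deleteEdges F).Reachable u w} with hX
  have huX : u ∈ X := SimpleGraph.Reachable.refl u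
  have hvX : v ∉ X := huv
  have hX1 : ∀ w ∈ X, ∃ w' ∈ X, G.Adj w w' := by
    intro w hw
    obtain ⟨w', hadj'⟩ := hiso w
    refine ⟨w', hw.trans hadj'.reachable, ?_⟩
    exact (SimpleGraph.deleteEdges_adj.mp hadj').1
  have hX2 : ∀ w ∈ Xᶜ, ∃ w' ∈ Xᶜ, G.Adj w w' := by
    intro w hw
    obtain ⟨w', hadj'⟩ := hiso w
    refine ⟨w', ?_, (SimpleGraph.deleteEdges_adj.mp hadj').1⟩
    intro hw'
    exact hw (hw'.trans hadj'.symm.reachable)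
  have hmain := (main_comb hA h0 hn hlow2 hupp2 X ⟨u, huX⟩ ⟨v, hvX⟩ hX1 hX2).1
  have hbd : edgeBoundary G X ⊆ F := by
    rintro e ⟨he, u', hu', v', hv', rfl⟩
    by_contra hnF
    have : (G.deleteEdges F).Adj u' v' :=
      SimpleGraph.deleteEdges_adj.mpr ⟨(SimpleGraph.mem_edgeSet G).1 he, hnF⟩
    exact hv' (hu'.trans this.reachable)
  calc n ≤ (OPairs G X).ncard := hmain
    _ = (edgeBoundary G X).ncard := (boundary_ncard X).symm
    _ ≤ F.ncard := Set.ncard_le_ncard hbd (Set.toFinite _)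

private lemma OP_cloud0 [NeZero n]
    (hA : ∀ x y, G.Adj x y ↔
      ((x.left = y.left ∧ y.right.toAdd - x.right.toAdd ∈ SB) ∨
       (x.right = y.right ∧ y.left.toAdd = x.left.toAdd + eVec n (1 + x.right.toAdd))))
    (h0 : (0 : ZMod n) ∉ SB) :
    (OPairs G {p : (Multiplicative (ZMod n → ZMod 2)) ⋊[φ] Multiplicative (ZMod n) |
      p.left.toAdd = 0}).ncard = n := by
  classical
  have hset : OPairs G {p : (Multiplicative (ZMod n → ZMod 2)) ⋊[φ] Multiplicative (ZMod n) |
        p.left.toAdd = 0} =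
      (fun i : ZMod n => (vmk φ (0 : ZMod n → ZMod 2) i,
        vmk φ ((0 : ZMod n → ZMod 2) + hunit (1 + i)) i)) '' Set.univ := by
    ext p
    constructor
    · rintro ⟨hp1, hp2, hadj⟩
      rw [hA] at hadj
      rcases hadj with ⟨h1, h2⟩ | ⟨h1, h2⟩
      · exact absurd ((congrArg toAdd h1).symm.trans hp1) hp2
      · refine ⟨p.1.right.toAdd, Set.mem_univ _, ?_⟩
        have e1 : p.1 = vmk φ (0 : ZMod n → ZMod 2) p.1.right.toAdd := by
          rw [← hp1, vmk_eta]
        have e2 : p.2 = vmk φ ((0 : ZMod n → ZMod 2) + hunit (1 + p.1.right.toAdd))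
            p.1.right.toAdd := by
          rw [← vmk_eta p.2]
          have hl : p.2.left.toAdd = (0 : ZMod n → ZMod 2) + hunit (1 + p.1.right.toAdd) := by
            rw [h2, hp1]; rfl
          have hr : p.2.right.toAdd = p.1.right.toAdd := (congrArg toAdd h1).symm
          rw [hl, hr]
        exact Prod.ext e1.symm e2.symm
    · rintro ⟨i, -, rfl⟩
      refine ⟨rfl, ?_, madj hA 0 rfl⟩
      exact fun hc => add_hunit_ne 0 (1 + i) hc
  rw [hset, Set.ncard_image_of_injective _ (fun i j hij => by
    simpa using (vmk_inj (i := i) (j := j) (congrArg Prod.fst hij)).2), Set.ncard_univ, Nat.card_zmod]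

private lemma cloud0_cut [NeZero n]
    (hA : ∀ x y, G.Adj x y ↔
      ((x.left = y.left ∧ y.right.toAdd - x.right.toAdd ∈ SB) ∨
       (x.right = y.right ∧ y.left.toAdd = x.left.toAdd + eVec n (1 + x.right.toAdd))))
    (h0 : (0 : ZMod n) ∉ SB) (hSBne : SB.Nonempty) :
    IsRestrictedEdgeCut G (edgeBoundary G
      {p : (Multiplicative (ZMod n → ZMod 2)) ⋊[φ] Multiplicative (ZMod n) |
        p.left.toAdd = 0}) := by
  classical
  set F₀ := edgeBoundary G
    {p : (Multiplicative (ZMod n → ZMod 2)) ⋊[φ] Multiplicative (ZMod n) |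
      p.left.toAdd = 0} with hF₀
  have hstay : ∀ {u v : (Multiplicative (ZMod n → ZMod 2)) ⋊[φ] Multiplicative (ZMod n)},
      (G.deleteEdges F₀).Walk u v → u.left.toAdd = 0 → v.left.toAdd = 0 := by
    intro u v w
    induction w with
    | nil => exact id
    | @cons u' b v' h pw ih =>
      intro hu
      apply ih
      have hGA := SimpleGraph.deleteEdges_adj.mp h
      by_contra hb
      exact hGA.2 ⟨(SimpleGraph.mem_edgeSet G).2 hGA.1, u', hu, b, hb, rfl⟩
  refine ⟨fun e he => he.1, ?_, ?_⟩
  · intro hc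
    obtain ⟨w⟩ := hc.preconnected (vmk φ (0 : ZMod n → ZMod 2) 0) (vmk φ (hunit 1) 0)
    have := hstay w rfl
    have h2 := congrFun this (1 : ZMod n)
    rw [show toAdd (vmk φ (hunit 1) (0 : ZMod n)).left (1 : ZMod n) = (1 : ZMod 2) from
      hunit_apply_self 1] at h2
    exact one_ne_zero h2
  · intro v
    obtain ⟨s₀, hs₀⟩ := hSBne
    refine ⟨vmk φ v.left.toAdd (v.right.toAdd + s₀), ?_⟩
    rw [SimpleGraph.deleteEdges_adj]
    constructor
    · rw [hA]
      left
      refine ⟨rfl, ?_⟩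
      show v.right.toAdd + s₀ - v.right.toAdd ∈ SB
      have : v.right.toAdd + s₀ - v.right.toAdd = s₀ := by ring
      rw [this]; exact hs₀
    · rintro ⟨-, u', hu', v', hv', heq⟩
      simp only [Sym2.eq, Sym2.rel_iff', Prod.mk.injEq, Prod.swap_prod_mk] at heq
      rcases heq with ⟨rfl, rfl⟩ | ⟨h1, h2⟩
      · exact hv' hu'
      · rw [← h2] at hu'
        rw [← h1] at hv'
        exact hv' (show toAdd v.left = 0 from hu')

private lemma deg_eq [NeZero n]
    (hA : ∀ x y, G.Adj x y ↔
      ((x.left = y.left ∧ y.right.toAdd - x.right.toAdd ∈ SB) ∨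
       (x.right = y.right ∧ y.left.toAdd = x.left.toAdd + eVec n (1 + x.right.toAdd))))
    (u : (Multiplicative (ZMod n → ZMod 2)) ⋊[φ] Multiplicative (ZMod n)) :
    (G.neighborSet u).ncard = SB.ncard + 1 := by
  classical
  have hset : G.neighborSet u =
      (fun z => vmk φ u.left.toAdd (u.right.toAdd + z)) '' SB ∪
      {vmk φ (u.left.toAdd + hunit (1 + u.right.toAdd)) u.right.toAdd} := by
    ext w
    simp only [SimpleGraph.mem_neighborSet, Set.mem_union, Set.mem_image,
      Set.mem_singleton_iff]
    constructor
    · intro hadj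
      rw [hA] at hadj
      rcases hadj with ⟨h1, h2⟩ | ⟨h1, h2⟩
      · left
        refine ⟨w.right.toAdd - u.right.toAdd, h2, ?_⟩
        have hz2 : u.right.toAdd + (w.right.toAdd - u.right.toAdd) = w.right.toAdd := by
          ring
        rw [hz2, congrArg toAdd h1, vmk_eta]
      · right
        rw [← vmk_eta w]
        have hr : w.right.toAdd = u.right.toAdd := (congrArg toAdd h1).symm
        rw [h2, hr]
        rfl
    · intro h
      rcases h with ⟨z, hz, rfl⟩ | rfl
      · rw [hA]
        left
        refine ⟨rfl, ?_⟩
        show u.right.toAdd + z - u.right.toAdd ∈ SB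
        have : u.right.toAdd + z - u.right.toAdd = z := by ring
        rw [this]; exact hz
      · exact madj hA _ rfl
  rw [hset, Set.ncard_union_eq ?disj (Set.toFinite _) (Set.toFinite _),
    Set.ncard_image_of_injective _ (fun z z' h => add_left_cancel (vmk_inj h).2),
    Set.ncard_singleton]
  case disj =>
    rw [Set.disjoint_left]
    rintro w ⟨z, hz, rfl⟩ hsing
    rw [Set.mem_singleton_iff] at hsing
    exact add_hunit_ne u.left.toAdd (1 + u.right.toAdd) ((vmk_inj hsing).1).symm

private lemma minEdge_eq [NeZero n]
    (hA : ∀ x y, G.Adj x y ↔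
      ((x.left = y.left ∧ y.right.toAdd - x.right.toAdd ∈ SB) ∨
       (x.right = y.right ∧ y.left.toAdd = x.left.toAdd + eVec n (1 + x.right.toAdd)))) :
    minEdgeDegree G = 2 * SB.ncard := by
  have hDset : {k | ∃ u v, G.Adj u v ∧
      (G.neighborSet u).ncard + (G.neighborSet v).ncard - 2 = k} = {2 * SB.ncard} := by
    ext k
    simp only [Set.mem_setOf_eq, Set.mem_singleton_iff]
    constructor
    · rintro ⟨u, v, hadj, hk⟩
      rw [deg_eq hA u, deg_eq hA v] at hk
      omega
    · rintro rfl
      refine ⟨vmk φ (0 : ZMod n → ZMod 2) 0,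
        vmk φ ((0 : ZMod n → ZMod 2) + hunit 1) 0, ?_, ?_⟩
      · have := madj hA (0 : ZMod n → ZMod 2) (i := 0) (j := 1) (by ring)
        exact this
      · rw [deg_eq hA, deg_eq hA]
        omega
  rw [minEdgeDegree, hDset, csInf_singleton]

private lemma star_cut [NeZero n]
    (hA : ∀ x y, G.Adj x y ↔
      ((x.left = y.left ∧ y.right.toAdd - x.right.toAdd ∈ SB) ∨
       (x.right = y.right ∧ y.left.toAdd = x.left.toAdd + eVec n (1 + x.right.toAdd)))) :
    ∃ F : Set (Sym2 ((Multiplicative (ZMod n → ZMod 2)) ⋊[φ] Multiplicative (ZMod n))),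
      F ⊆ G.edgeSet ∧ F.ncard = SB.ncard + 1 ∧ ¬(G.deleteEdges F).Connected := by
  classical
  set v₀ := vmk φ (0 : ZMod n → ZMod 2) 0 with hv₀
  set F := {e ∈ G.edgeSet | v₀ ∈ e} with hFdef
  have hFsub : F ⊆ G.edgeSet := fun e he => he.1
  have hFcard : F.ncard = SB.ncard + 1 := by
    have himg : F = (fun w => s(v₀, w)) '' G.neighborSet v₀ := by
      ext e
      constructor
      · rintro ⟨he, hv⟩
        obtain ⟨b, rfl⟩ := Sym2.mem_iff_exists.1 hv
        exact ⟨b, (SimpleGraph.mem_edgeSet G).1 he, rfl⟩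
      · rintro ⟨w, hw, rfl⟩
        exact ⟨(SimpleGraph.mem_edgeSet G).2 hw, Sym2.mem_mk_left _ _⟩
    rw [himg, Set.ncard_image_of_injOn ?inj, deg_eq hA]
    case inj =>
      intro w hw w' hw' h
      simp only [Sym2.eq, Sym2.rel_iff', Prod.mk.injEq, Prod.swap_prod_mk] at h
      rcases h with ⟨-, h⟩ | ⟨h1, h2⟩
      · exact h
      · rw [h2]; exact h1
  have hisol : ∀ w, ¬ (G.deleteEdges F).Adj v₀ w := by
    intro w hadj
    have hGA := SimpleGraph.deleteEdges_adj.mp hadj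
    exact hGA.2 ⟨(SimpleGraph.mem_edgeSet G).2 hGA.1, Sym2.mem_mk_left _ _⟩
  refine ⟨F, hFsub, hFcard, ?_⟩
  intro hc
  have hreach := hc.preconnected v₀ (vmk φ (hunit 1) 0)
  have hiso_r : ∀ u, (G.deleteEdges F).Reachable v₀ u → v₀ = u := by
    intro u hr
    obtain ⟨w⟩ := hr
    cases w with
    | nil => rfl
    | cons h p => exact absurd h (hisol _)
  have heq : v₀ = vmk φ (hunit 1) 0 := hiso_r _ hreach
  have h1 := congrFun (vmk_inj heq).1 (1 : ZMod n)
  rw [hunit_apply_self] at h1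
  exact one_ne_zero h1.symm

private lemma induce_adj_of {W : Set ((Multiplicative (ZMod n → ZMod 2)) ⋊[φ] Multiplicative (ZMod n))}
    {u v : (Multiplicative (ZMod n → ZMod 2)) ⋊[φ] Multiplicative (ZMod n)}
    (hu : u ∈ W) (hv : v ∈ W) (h : G.Adj u v) :
    (G.induce W).Adj ⟨u, hu⟩ ⟨v, hv⟩ := h

private lemma cloud_reach [NeZero n]
    (hA : ∀ x y, G.Adj x y ↔
      ((x.left = y.left ∧ y.right.toAdd - x.right.toAdd ∈ SB) ∨
       (x.right = y.right ∧ y.left.toAdd = x.left.toAdd + eVec n (1 + x.right.toAdd))))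
    (hlow2 : n + 1 ≤ 2 * SB.ncard)
    (W : Set ((Multiplicative (ZMod n → ZMod 2)) ⋊[φ] Multiplicative (ZMod n)))
    (a : ZMod n → ZMod 2) (hsub : ∀ i, vmk φ a i ∈ W) (i j : ZMod n) :
    (G.induce W).Reachable ⟨vmk φ a i, hsub i⟩ ⟨vmk φ a j, hsub j⟩ := by
  classical
  by_cases hd : j - i = 0
  · have : j = i := by
      have := sub_eq_zero.1 hd
      exact this
    subst this
    rfl
  · have hnd : ¬ Disjoint SB ((fun z => (j - i) - z) '' SB) := by
      intro hdisj
      have h1 : (SB ∪ (fun z => (j - i) - z) '' SB).ncard = 2 * SB.ncard := by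
        rw [Set.ncard_union_eq hdisj (Set.toFinite _) (Set.toFinite _),
          Set.ncard_image_of_injective _ (fun x y h => by
            have : (j-i) - ((j-i) - x) = (j-i) - ((j-i) - y) := by rw [h]
            simpa using this)]
        omega
      have h2 : (SB ∪ (fun z => (j - i) - z) '' SB).ncard ≤ n := by
        have := Set.ncard_le_ncard (Set.subset_univ (SB ∪ (fun z => (j - i) - z) '' SB))
          (Set.toFinite _)
        rwa [Set.ncard_univ, Nat.card_zmod] at this
      omega
    obtain ⟨z, hz1, hz2⟩ := Set.not_disjoint_iff.1 hnd
    obtain ⟨z', hz', hzz⟩ := hz2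
    have hadj1 : G.Adj (vmk φ a i) (vmk φ a (i + z)) := by
      rw [hA]; left
      refine ⟨rfl, ?_⟩
      show i + z - i ∈ SB
      have : i + z - i = z := by ring
      rw [this]; exact hz1
    have hadj2 : G.Adj (vmk φ a (i + z)) (vmk φ a j) := by
      rw [hA]; left
      refine ⟨rfl, ?_⟩
      show j - (i + z) ∈ SB
      have : j - (i + z) = (j - i) - z := by ring
      rw [this, ← hzz]
      have : j - i - (j - i - z') = z' := by ring
      rw [this]; exact hz'
    exact ((induce_adj_of (hsub i) (hsub (i + z)) hadj1).reachable).trans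
      (induce_adj_of (hsub (i + z)) (hsub j) hadj2).reachable

private lemma cloud0_conn [NeZero n]
    (hA : ∀ x y, G.Adj x y ↔
      ((x.left = y.left ∧ y.right.toAdd - x.right.toAdd ∈ SB) ∨
       (x.right = y.right ∧ y.left.toAdd = x.left.toAdd + eVec n (1 + x.right.toAdd))))
    (hlow2 : n + 1 ≤ 2 * SB.ncard) :
    (G.induce {p : (Multiplicative (ZMod n → ZMod 2)) ⋊[φ] Multiplicative (ZMod n) |
      p.left.toAdd = 0}).Connected := by
  rw [SimpleGraph.connected_iff]
  refine ⟨?_, ⟨⟨vmk φ (0 : ZMod n → ZMod 2) 0, rfl⟩⟩⟩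
  rintro ⟨u, hu⟩ ⟨v, hv⟩
  have hu' : (⟨u, hu⟩ : {p : (Multiplicative (ZMod n → ZMod 2)) ⋊[φ] Multiplicative (ZMod n) //
      p ∈ {p : (Multiplicative (ZMod n → ZMod 2)) ⋊[φ] Multiplicative (ZMod n) |
        p.left.toAdd = 0}}) = ⟨vmk φ (0 : ZMod n → ZMod 2) u.right.toAdd, rfl⟩ := by
    apply Subtype.ext
    show u = vmk φ 0 u.right.toAdd
    rw [← hu, vmk_eta]
  have hv' : (⟨v, hv⟩ : {p : (Multiplicative (ZMod n → ZMod 2)) ⋊[φ] Multiplicative (ZMod n) //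
      p ∈ {p : (Multiplicative (ZMod n → ZMod 2)) ⋊[φ] Multiplicative (ZMod n) |
        p.left.toAdd = 0}}) = ⟨vmk φ (0 : ZMod n → ZMod 2) v.right.toAdd, rfl⟩ := by
    apply Subtype.ext
    show v = vmk φ 0 v.right.toAdd
    rw [← hv, vmk_eta]
  rw [hu', hv']
  exact cloud_reach hA hlow2
    {p : (Multiplicative (ZMod n → ZMod 2)) ⋊[φ] Multiplicative (ZMod n) | p.left.toAdd = 0}
    0 (fun _ => rfl) _ _

private lemma comp_reach_aux [NeZero n]
    (hA : ∀ x y, G.Adj x y ↔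
      ((x.left = y.left ∧ y.right.toAdd - x.right.toAdd ∈ SB) ∨
       (x.right = y.right ∧ y.left.toAdd = x.left.toAdd + eVec n (1 + x.right.toAdd))))
    (hlow2 : n + 1 ≤ 2 * SB.ncard) {b : ZMod n → ZMod 2} (hb : b ≠ 0) :
    ∀ (k : ℕ) (a : ZMod n → ZMod 2) (ha : a ≠ 0),
      (Finset.univ.filter (fun m => a m ≠ b m)).card = k →
      ∀ i j, (G.induce ({p : (Multiplicative (ZMod n → ZMod 2)) ⋊[φ] Multiplicative (ZMod n) |
        p.left.toAdd = 0}ᶜ)).Reachable ⟨vmk φ a i, fun hc => ha hc⟩ ⟨vmk φ b j, fun hc => hb hc⟩ := by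
  classical
  intro k
  induction k using Nat.strong_induction_on with
  | _ k IH =>
    intro a ha hcard i j
    by_cases hab : a = b
    · subst hab
      exact cloud_reach hA hlow2
        ({p : (Multiplicative (ZMod n → ZMod 2)) ⋊[φ] Multiplicative (ZMod n) |
          p.left.toAdd = 0}ᶜ) a (fun _ hc => ha hc) i j
    · have hD : (Finset.univ.filter (fun m => a m ≠ b m)).Nonempty := by
        rw [Finset.filter_nonempty_iff]
        by_contra hc
        push_neg at hc
        exact hab (funext fun m => hc m (Finset.mem_univ m))
      obtain ⟨m, hm⟩ := hD
      rw [Finset.mem_filter] at hm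
      -- helper to do one flip
      have hstep : ∀ (m' : ZMod n), a m' ≠ b m' → a + hunit m' ≠ 0 →
          (Finset.univ.filter (fun m'' => (a + hunit m') m'' ≠ b m'')).card < k →
          (G.induce ({p : (Multiplicative (ZMod n → ZMod 2)) ⋊[φ] Multiplicative (ZMod n) |
            p.left.toAdd = 0}ᶜ)).Reachable ⟨vmk φ a i, fun hc => ha hc⟩
            ⟨vmk φ b j, fun hc => hb hc⟩ := by
        intro m' hm' ha' hlt
        have hr1 := cloud_reach hA hlow2
          ({p : (Multiplicative (ZMod n → ZMod 2)) ⋊[φ] Multiplicative (ZMod n) |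
            p.left.toAdd = 0}ᶜ) a (fun _ hc => ha hc) i (m' - 1)
        have hadj : G.Adj (vmk φ a (m' - 1)) (vmk φ (a + hunit m') (m' - 1)) :=
          madj hA a (by ring)
        have hr2 := (induce_adj_of
          (W := {p : (Multiplicative (ZMod n → ZMod 2)) ⋊[φ] Multiplicative (ZMod n) |
            p.left.toAdd = 0}ᶜ)
          (fun hc => ha hc) (fun hc => ha' hc) hadj).reachable
        have hr3 := IH _ hlt (a + hunit m') ha' rfl (m' - 1) j
        exact (hr1.trans hr2).trans hr3
      have hcarddec : ∀ m', a m' ≠ b m' →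
          (Finset.univ.filter (fun m'' => (a + hunit m') m'' ≠ b m'')).card < k := by
        intro m' hm'
        have hkey : ∀ m'', (a + hunit m') m'' = if m'' = m' then b m'' else a m'' := by
          intro m''
          by_cases hmm : m'' = m'
          · subst hmm
            rw [if_pos rfl, add_hunit_apply, hunit_apply_self]
            exact (by decide : ∀ x y : ZMod 2, x ≠ y → x + 1 = y) _ _ hm'
          · rw [if_neg hmm, add_hunit_apply, hunit_apply_ne hmm, add_zero]
        have hfilter : Finset.univ.filter (fun m'' => (a + hunit m') m'' ≠ b m'')
            = (Finset.univ.filter (fun m'' => a m'' ≠ b m'')).erase m' := by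
          ext m''
          simp only [Finset.mem_filter, Finset.mem_erase, Finset.mem_univ, true_and]
          constructor
          · intro h'
            have hmm : m'' ≠ m' := by
              intro he; subst he
              rw [hkey, if_pos rfl] at h'
              exact h' rfl
            rw [hkey, if_neg hmm] at h'
            exact ⟨hmm, h'⟩
          · rintro ⟨hmm, h'⟩
            rw [hkey, if_neg hmm]
            exact h'
        rw [hfilter, ← hcard]
        exact Finset.card_erase_lt_of_mem (Finset.mem_filter.2 ⟨Finset.mem_univ m', hm'⟩)
      by_cases hz : a + hunit m = 0
      · -- a = hunit m : pick another difference coordinate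
        have ham : a m = 1 := by
          have := congrFun hz m
          rw [add_hunit_apply, hunit_apply_self] at this
          exact (by decide : ∀ x : ZMod 2, x + 1 = 0 → x = 1) _ this
        have hD2 : ∃ m', m' ≠ m ∧ a m' ≠ b m' := by
          by_contra hc
          push_neg at hc
          apply hb
          rw [← hz]
          funext m''
          by_cases hmm : m'' = m
          · subst hmm
            rw [add_hunit_apply, hunit_apply_self]
            exact (by decide : ∀ x y : ZMod 2, x ≠ y → y = x + 1) _ _ hm.2
          · rw [add_hunit_apply, hunit_apply_ne hmm, add_zero]
            exact (hc m'' hmm).symm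
        obtain ⟨m', hm'ne, hm'⟩ := hD2
        have ha'' : a + hunit m' ≠ 0 := by
          intro hc
          have hcm := congrFun hc m
          rw [add_hunit_apply, hunit_apply_ne (fun he : m = m' => hm'ne he.symm), add_zero,
            ham] at hcm
          exact one_ne_zero hcm
        exact hstep m' hm' ha'' (hcarddec m' hm')
      · exact hstep m hm.2 hz (hcarddec m hm.2)

private lemma comp_conn [NeZero n]
    (hA : ∀ x y, G.Adj x y ↔
      ((x.left = y.left ∧ y.right.toAdd - x.right.toAdd ∈ SB) ∨
       (x.right = y.right ∧ y.left.toAdd = x.left.toAdd + eVec n (1 + x.right.toAdd))))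
    (hlow2 : n + 1 ≤ 2 * SB.ncard) :
    (G.induce ({p : (Multiplicative (ZMod n → ZMod 2)) ⋊[φ] Multiplicative (ZMod n) |
      p.left.toAdd = 0}ᶜ)).Connected := by
  have hone : (hunit (1 : ZMod n) : ZMod n → ZMod 2) ≠ 0 := by
    intro hc
    have := congrFun hc 1
    rw [hunit_apply_self] at this
    exact one_ne_zero this
  rw [SimpleGraph.connected_iff]
  refine ⟨?_, ⟨⟨vmk φ (hunit 1) 0, fun hc => hone hc⟩⟩⟩
  rintro ⟨u, hu⟩ ⟨v, hv⟩
  have hau : u.left.toAdd ≠ 0 := hu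
  have hav : v.left.toAdd ≠ 0 := hv
  have hr := comp_reach_aux hA hlow2 hav _ u.left.toAdd hau rfl u.right.toAdd v.right.toAdd
  have hu' : (⟨u, hu⟩ : {p : (Multiplicative (ZMod n → ZMod 2)) ⋊[φ] Multiplicative (ZMod n) //
      p ∈ ({p : (Multiplicative (ZMod n → ZMod 2)) ⋊[φ] Multiplicative (ZMod n) |
        p.left.toAdd = 0}ᶜ)}) = ⟨vmk φ u.left.toAdd u.right.toAdd, fun hc => hau hc⟩ := by
    apply Subtype.ext
    exact (vmk_eta u).symm
  have hv' : (⟨v, hv⟩ : {p : (Multiplicative (ZMod n → ZMod 2)) ⋊[φ] Multiplicative (ZMod n) //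
      p ∈ ({p : (Multiplicative (ZMod n → ZMod 2)) ⋊[φ] Multiplicative (ZMod n) |
        p.left.toAdd = 0}ᶜ)}) = ⟨vmk φ v.left.toAdd v.right.toAdd, fun hc => hav hc⟩ := by
    apply Subtype.ext
    exact (vmk_eta v).symm
  rw [hu', hv']
  exact hr

private lemma rec_eq [NeZero n]
    (hA : ∀ x y, G.Adj x y ↔
      ((x.left = y.left ∧ y.right.toAdd - x.right.toAdd ∈ SB) ∨
       (x.right = y.right ∧ y.left.toAdd = x.left.toAdd + eVec n (1 + x.right.toAdd))))
    (h0 : (0 : ZMod n) ∉ SB)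
    (hn : 3 ≤ n) (hlow2 : n + 1 ≤ 2 * SB.ncard) (hupp2 : SB.ncard + 2 ≤ n) :
    restrictedEdgeConn G = n := by
  have hSBne : SB.Nonempty := Set.nonempty_of_ncard_ne_zero (by omega)
  have hcut := cloud0_cut hA h0 hSBne
  have hbc : (edgeBoundary G
      {p : (Multiplicative (ZMod n → ZMod 2)) ⋊[φ] Multiplicative (ZMod n) |
        p.left.toAdd = 0}).ncard = n := by
    rw [boundary_ncard, OP_cloud0 hA h0]
  apply le_antisymm
  · exact Nat.sInf_le ⟨_, hcut, hbc⟩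
  · refine le_csInf ?_ ?_
    · exact ⟨n, edgeBoundary G
        {p : (Multiplicative (ZMod n → ZMod 2)) ⋊[φ] Multiplicative (ZMod n) |
          p.left.toAdd = 0}, hcut, hbc⟩
    · rintro k ⟨F, hF, rfl⟩
      exact cut_lb hA h0 hn hlow2 hupp2 F hF

private lemma econ_lt [NeZero n]
    (hA : ∀ x y, G.Adj x y ↔
      ((x.left = y.left ∧ y.right.toAdd - x.right.toAdd ∈ SB) ∨
       (x.right = y.right ∧ y.left.toAdd = x.left.toAdd + eVec n (1 + x.right.toAdd))))
    (hupp2 : SB.ncard + 2 ≤ n) : edgeConn G < n := by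
  obtain ⟨F, h1, h2, h3⟩ := star_cut hA
  have : edgeConn G ≤ SB.ncard + 1 := Nat.sInf_le ⟨F, h1, h2, h3⟩
  omega

private lemma cloud0_fragment [NeZero n]
    (hA : ∀ x y, G.Adj x y ↔
      ((x.left = y.left ∧ y.right.toAdd - x.right.toAdd ∈ SB) ∨
       (x.right = y.right ∧ y.left.toAdd = x.left.toAdd + eVec n (1 + x.right.toAdd))))
    (h0 : (0 : ZMod n) ∉ SB)
    (hn : 3 ≤ n) (hlow2 : n + 1 ≤ 2 * SB.ncard) (hupp2 : SB.ncard + 2 ≤ n) :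
    IsLambdaPrimeFragment G
      {p : (Multiplicative (ZMod n → ZMod 2)) ⋊[φ] Multiplicative (ZMod n) |
        p.left.toAdd = 0} := by
  have hSBne : SB.Nonempty := Set.nonempty_of_ncard_ne_zero (by omega)
  refine ⟨?_, cloud0_cut hA h0 hSBne, ?_, cloud0_conn hA hlow2, comp_conn hA hlow2⟩
  · rw [cloud_ncard]; omega
  · rw [boundary_ncard, OP_cloud0 hA h0, rec_eq hA h0 hn hlow2 hupp2]

private lemma card_V [NeZero n] :
    Nat.card ((Multiplicative (ZMod n → ZMod 2)) ⋊[φ] Multiplicative (ZMod n)) = n * 2 ^ n := by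
  have e : ((Multiplicative (ZMod n → ZMod 2)) ⋊[φ] Multiplicative (ZMod n)) ≃
      (Multiplicative (ZMod n → ZMod 2)) × Multiplicative (ZMod n) :=
    ⟨fun p => (p.left, p.right), fun q => ⟨q.1, q.2⟩, fun p => rfl, fun q => rfl⟩
  rw [Nat.card_congr e, Nat.card_prod, Nat.card_congr (Multiplicative.toAdd),
    Nat.card_congr (Multiplicative.toAdd), Nat.card_fun, Nat.card_zmod, Nat.card_zmod,
    mul_comm]

private lemma atom_iso [NeZero n]
    (hA : ∀ x y, G.Adj x y ↔
      ((x.left = y.left ∧ y.right.toAdd - x.right.toAdd ∈ SB) ∨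
       (x.right = y.right ∧ y.left.toAdd = x.left.toAdd + eVec n (1 + x.right.toAdd))))
    (h0 : (0 : ZMod n) ∉ SB) (hsym : ∀ z ∈ SB, -z ∈ SB)
    (hn : 3 ≤ n) (hlow2 : n + 1 ≤ 2 * SB.ncard) (hupp2 : SB.ncard + 2 ≤ n)
    (X : Set ((Multiplicative (ZMod n → ZMod 2)) ⋊[φ] Multiplicative (ZMod n)))
    (hatom : IsLambdaPrimeAtom G X) :
    Nonempty ((G.induce X) ≃g SimpleGraph.circulantGraph SB) := by
  classical
  obtain ⟨⟨hcard2, hcut, hncard, hconnX, hconnXc⟩, hmin⟩ := hatom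
  have hXle : X.ncard ≤ n := by
    have := hmin _ (cloud0_fragment hA h0 hn hlow2 hupp2)
    rwa [cloud_ncard] at this
  obtain ⟨hFsub, hdis, hiso⟩ := hcut
  have hX1 : ∀ v ∈ X, ∃ w ∈ X, G.Adj v w := by
    intro v hv
    obtain ⟨w, hadj⟩ := hiso v
    have hGA := SimpleGraph.deleteEdges_adj.mp hadj
    refine ⟨w, ?_, hGA.1⟩
    by_contra hw
    exact hGA.2 ⟨(SimpleGraph.mem_edgeSet G).2 hGA.1, v, hv, w, hw, rfl⟩
  have hX2 : ∀ v ∈ Xᶜ, ∃ w ∈ Xᶜ, G.Adj v w := by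
    intro v hv
    obtain ⟨w, hadj⟩ := hiso v
    have hGA := SimpleGraph.deleteEdges_adj.mp hadj
    refine ⟨w, ?_, hGA.1⟩
    intro hw
    exact hGA.2 ⟨(SimpleGraph.mem_edgeSet G).2 hGA.1, w, hw, v, hv, Sym2.eq_swap⟩
  have hne : X.Nonempty := Set.nonempty_of_ncard_ne_zero (by omega)
  have hne' : Xᶜ.Nonempty := by
    obtain ⟨⟨y, hy⟩⟩ := hconnXc.nonempty
    exact ⟨y, hy⟩
  have hOPle : (OPairs G X).ncard ≤ n := by
    rw [← boundary_ncard, hncard, rec_eq hA h0 hn hlow2 hupp2]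
  obtain ⟨a, rfl⟩ := (main_comb hA h0 hn hlow2 hupp2 X hne hne' hX1 hX2).2 hOPle hXle
  refine ⟨⟨⟨fun p => p.1.right.toAdd, fun i => ⟨vmk φ a i, rfl⟩, ?_, fun i => rfl⟩, ?_⟩⟩
  · rintro ⟨p, hp⟩
    apply Subtype.ext
    show vmk φ a p.right.toAdd = p
    rw [← hp, vmk_eta]
  · rintro ⟨p, hp⟩ ⟨q, hq⟩
    show (SimpleGraph.circulantGraph SB).Adj p.right.toAdd q.right.toAdd ↔ G.Adj p q
    rw [SimpleGraph.circulantGraph, SimpleGraph.fromRel_adj, hA]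
    constructor
    · rintro ⟨hne2, h | h⟩
      · left
        refine ⟨toAdd.injective ((hp : p.left.toAdd = a).trans (hq : q.left.toAdd = a).symm), ?_⟩
        have := hsym _ h
        rwa [neg_sub] at this
      · exact Or.inl ⟨toAdd.injective ((hp : p.left.toAdd = a).trans
          (hq : q.left.toAdd = a).symm), h⟩
    · rintro (⟨h1, h2⟩ | ⟨h1, h2⟩)
      · refine ⟨?_, Or.inr h2⟩
        intro he
        rw [he, sub_self] at h2
        exact h0 h2
      · exfalso
        have h2' : q.left.toAdd = p.left.toAdd + hunit (1 + p.right.toAdd) := h2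
        rw [(hp : p.left.toAdd = a), (hq : q.left.toAdd = a)] at h2'
        exact add_hunit_ne a (1 + p.right.toAdd) h2'.symm

end Main

/-- Theorem 5.9. Let `A = (Z_2)^n`, `B = Z_n`,
`S_B = ±{s_1, …, s_k} ⊆ Z_n` with `k ≥ 2` and `s_1 < … < s_k < n/2`, let `φ` be the
cyclic-shift action of `B` on `A`, and let `G = C_{A ⋊[φ] B}(S)` where
`S = {(0, s) : s ∈ S_B} ∪ {(e_1, 0)}`. If `n/2 < |S_B| < n - 1`, then `G` is not
`λ'`-optimal, `λ(G) < λ'(G) = n < υ(G)/2` where `υ(G) = n·2^n` is the order of `G`, and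
every `λ'`-atom of `G` induces a subgraph isomorphic to the circulant graph
`C_B(S_B)`. -/
theorem cayleyGraph_shift_semidirect_not_optimal
    (n k : ℕ) (hk : 2 ≤ k) (s : Fin k → ℕ)
    (hmono : StrictMono s) (hpos : ∀ i, 0 < s i) (hhalf : ∀ i, 2 * s i < n)
    (SB : Set (ZMod n))
    (hSB : SB = {z : ZMod n | ∃ i : Fin k, z = (s i : ZMod n) ∨ z = -(s i : ZMod n)})
    (φ : Multiplicative (ZMod n) →* MulAut (Multiplicative (ZMod n → ZMod 2)))
    (hφ : ∀ (i : Multiplicative (ZMod n)) (a : Multiplicative (ZMod n → ZMod 2))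
      (j : ZMod n),
      Multiplicative.toAdd (φ i a) j = Multiplicative.toAdd a (j - Multiplicative.toAdd i))
    (S : Set ((Multiplicative (ZMod n → ZMod 2)) ⋊[φ] Multiplicative (ZMod n)))
    (hS : S = {p : (Multiplicative (ZMod n → ZMod 2)) ⋊[φ] Multiplicative (ZMod n) |
        ∃ z ∈ SB, p = ⟨1, Multiplicative.ofAdd z⟩} ∪
      {(⟨Multiplicative.ofAdd (eVec n 1), 1⟩ :
        (Multiplicative (ZMod n → ZMod 2)) ⋊[φ] Multiplicative (ZMod n))})
    (hlow : n / 2 < SB.ncard) (hupp : SB.ncard < n - 1) :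
    ¬LambdaPrimeOptimal (cayleyGraph S) ∧
    edgeConn (cayleyGraph S) < restrictedEdgeConn (cayleyGraph S) ∧
    restrictedEdgeConn (cayleyGraph S) = n ∧
    Nat.card ((Multiplicative (ZMod n → ZMod 2)) ⋊[φ] Multiplicative (ZMod n))
      = n * 2 ^ n ∧
    2 * n < n * 2 ^ n ∧
    ∀ X : Set ((Multiplicative (ZMod n → ZMod 2)) ⋊[φ] Multiplicative (ZMod n)),
      IsLambdaPrimeAtom (cayleyGraph S) X →
      Nonempty ((cayleyGraph S).induce X ≃g SimpleGraph.circulantGraph SB) := by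
  have hn3 : 3 ≤ n := by
    have h1 := hpos ⟨0, by omega⟩
    have h2 := hhalf ⟨0, by omega⟩
    omega
  haveI : NeZero n := ⟨by omega⟩
  have h0 : (0 : ZMod n) ∉ SB := by
    rw [hSB]
    rintro ⟨i, hi | hi⟩
    · have hz : ((s i : ℕ) : ZMod n) = 0 := hi.symm
      rw [ZMod.natCast_eq_zero_iff] at hz
      have hle := Nat.le_of_dvd (hpos i) hz
      have := hhalf i
      omega
    · have hz : ((s i : ℕ) : ZMod n) = 0 := neg_eq_zero.1 hi.symm
      rw [ZMod.natCast_eq_zero_iff] at hz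
      have hle := Nat.le_of_dvd (hpos i) hz
      have := hhalf i
      omega
  have hsym : ∀ z ∈ SB, -z ∈ SB := by
    intro z hz
    rw [hSB] at hz ⊢
    obtain ⟨i, hi | hi⟩ := hz
    · exact ⟨i, Or.inr (by rw [hi])⟩
    · exact ⟨i, Or.inl (by rw [hi, neg_neg])⟩
  have hlow2 : n + 1 ≤ 2 * SB.ncard := by omega
  have hupp2 : SB.ncard + 2 ≤ n := by omega
  have hA := adj_iff hφ hS hsym h0
  have hrec := rec_eq hA h0 hn3 hlow2 hupp2
  refine ⟨?_, ?_, hrec, card_V, ?_, ?_⟩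
  · rw [LambdaPrimeOptimal, hrec, minEdge_eq hA]
    omega
  · rw [hrec]
    exact econ_lt hA hupp2
  · have h2n : 2 < 2 ^ n := by
      have h8 : 2 ^ 3 ≤ 2 ^ n := Nat.pow_le_pow_right (by norm_num) hn3
      omega
    calc 2 * n = n * 2 := by ring
      _ < n * 2 ^ n := by
          exact Nat.mul_lt_mul_of_le_of_lt (le_refl n) h2n (by omega)
  · exact fun X hatom => atom_iso hA h0 hsym hn3 hlow2 hupp2 X hatom
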